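/- arXiv:1505.02803 — 3 statements merged into one kernel-verified Lean document; each statement's English description precedes it below -/
import Mathlib

section
/- Let 0 < α < 1. There exist constants c₁, c₂ > 0 (depending only on α) such that for every x ≥ 0 one has c₁/(1+x) ≤ E_{α,1}(-x) ≤ c₂/(1+x), where E_{α,1} is the two-parameter Mittag-Leffler function with parameters a = α, b = 1. -/
open Filter Finset

namespace ML

/-- coefficients of `(1-z)^{-β}` -/
noncomputable def cf (β : ℝ) (k : ℕ) : ℝ := ∏ i ∈ Finset.range k, (β + i) / (i + 1)

@[simp] lemma cf_zero (β : ℝ) : cf β 0 = 1 := by simp [cf]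

lemma cf_succ (β : ℝ) (k : ℕ) : cf β (k + 1) = cf β k * ((β + k) / (k + 1)) :=
  Finset.prod_range_succ _ k

lemma succ_mul_cf (β : ℝ) (k : ℕ) : ((k:ℝ) + 1) * cf β (k + 1) = (β + k) * cf β k := by
  rw [cf_succ]
  have h : ((k:ℝ) + 1) ≠ 0 := by positivity
  field_simp

lemma cf_nonneg {β : ℝ} (hβ : 0 ≤ β) (k : ℕ) : 0 ≤ cf β k :=
  Finset.prod_nonneg (fun i _ => by positivity)

lemma cf_pos {β : ℝ} (hβ : 0 < β) (k : ℕ) : 0 < cf β k :=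
  Finset.prod_pos (fun i _ => by positivity)

@[simp] lemma cf_one (k : ℕ) : cf 1 k = 1 := by
  induction k with
  | zero => simp [cf]
  | succ n ih =>
    rw [cf_succ, ih, one_mul]
    have h1 : (1:ℝ) + n = n + 1 := by ring
    have h2 : ((n:ℝ) + 1) ≠ 0 := by positivity
    rw [h1, div_self h2]

@[simp] lemma cf_one_arg (β : ℝ) : cf β 1 = β := by
  simp [cf]

/-- Vandermonde convolution for generalized binomial coefficients. -/
lemma vandermonde (s t : ℝ) : ∀ n : ℕ,
    ∑ j ∈ Finset.range (n + 1), cf s j * cf t (n - j) = cf (s + t) n := by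
  intro n
  induction n with
  | zero => simp
  | succ n ih =>
    have key : (n + 1 : ℝ) * ∑ j ∈ Finset.range (n + 2), cf s j * cf t (n + 1 - j)
        = (s + t + n) * ∑ j ∈ Finset.range (n + 1), cf s j * cf t (n - j) := by
      have expand : ∀ j ∈ Finset.range (n + 2),
          (n + 1 : ℝ) * (cf s j * cf t (n + 1 - j))
          = (j : ℝ) * cf s j * cf t (n + 1 - j)
            + cf s j * (((n + 1 - j : ℕ) : ℝ) * cf t (n + 1 - j)) := by
        intro j hj
        have hj' : j ≤ n + 1 := by
          have := Finset.mem_range.mp hj; omega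
        rw [Nat.cast_sub hj']
        push_cast
        ring
      rw [Finset.mul_sum, Finset.sum_congr rfl expand, Finset.sum_add_distrib]
      have e1 : ∑ j ∈ Finset.range (n + 2), (j : ℝ) * cf s j * cf t (n + 1 - j)
          = ∑ i ∈ Finset.range (n + 1), (s + i) * cf s i * cf t (n - i) := by
        rw [Finset.sum_range_succ' (fun j => (j : ℝ) * cf s j * cf t (n + 1 - j))]
        simp only [Nat.cast_zero, zero_mul, add_zero]
        apply Finset.sum_congr rfl
        intro i hi
        have h2 : (n + 1 - (i + 1) : ℕ) = n - i := by omega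
        rw [h2]
        push_cast
        linear_combination cf t (n - i) * succ_mul_cf s i
      have e2 : ∑ j ∈ Finset.range (n + 2), cf s j * (((n + 1 - j : ℕ) : ℝ) * cf t (n + 1 - j))
          = ∑ j ∈ Finset.range (n + 1), cf s j * ((t + ((n - j : ℕ) : ℝ)) * cf t (n - j)) := by
        rw [Finset.sum_range_succ (fun j => cf s j * (((n + 1 - j : ℕ) : ℝ) * cf t (n + 1 - j)))]
        simp only [Nat.sub_self, Nat.cast_zero, zero_mul, mul_zero, add_zero]
        apply Finset.sum_congr rfl
        intro j hj
        have hj' : j ≤ n := by have := Finset.mem_range.mp hj; omega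
        have h2 : (n + 1 - j : ℕ) = (n - j) + 1 := by omega
        rw [h2]
        push_cast
        linear_combination cf s j * succ_mul_cf t (n - j)
      rw [e1, e2, ← Finset.sum_add_distrib, Finset.mul_sum]
      apply Finset.sum_congr rfl
      intro j hj
      have hj' : j ≤ n := by have := Finset.mem_range.mp hj; omega
      rw [Nat.cast_sub hj']
      ring
    have hne : (n + 1 : ℝ) ≠ 0 := by positivity
    rw [ih] at key
    have h3 : ((n:ℝ) + 1) * cf (s+t) (n+1) = (s + t + n) * cf (s+t) n := succ_mul_cf (s+t) n
    have := key.trans h3.symm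
    exact mul_left_cancel₀ hne this

-- geometric bound for cf
lemma cf_le_geom {β B : ℝ} (hβ0 : 0 ≤ β) (hβ : β ≤ B) (hB : 1 ≤ B) (k : ℕ) :
    cf β k ≤ B ^ k := by
  have : ∀ i ∈ Finset.range k, (β + i) / (i + 1) ≤ B := by
    intro i _
    rw [div_le_iff₀ (by positivity : (0:ℝ) < i + 1)]
    nlinarith [Nat.cast_nonneg (α := ℝ) i]
  calc cf β k ≤ ∏ i ∈ Finset.range k, B := by
        apply Finset.prod_le_prod (fun i _ => by positivity) this
    _ = B ^ k := by rw [Finset.prod_const, Finset.card_range]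

lemma summable_poly_geom (k : ℕ) (c : ℝ) {q : ℝ} (h0 : 0 ≤ q) (h1 : q < 1) :
    Summable (fun m : ℕ => ((m:ℝ) + c) ^ k * q ^ m) := by
  have base : ∀ j : ℕ, Summable (fun m : ℕ => (m:ℝ) ^ j * q ^ m * (c ^ (k - j) * (k.choose j))) :=
    fun j => (summable_pow_mul_geometric_of_norm_lt_one (R := ℝ) j
      (by rwa [Real.norm_eq_abs, abs_of_nonneg h0])).mul_right _
  have e : (fun m : ℕ => ((m:ℝ) + c) ^ k * q ^ m)
      = fun m : ℕ => ∑ j ∈ Finset.range (k + 1), (m:ℝ) ^ j * q ^ m * (c ^ (k - j) * (k.choose j)) := by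
    funext m
    rw [add_pow, Finset.sum_mul]
    apply Finset.sum_congr rfl
    intro j _
    ring
  rw [e]
  exact summable_sum (fun j _ => base j)

lemma summable_main {q : ℝ} (h0 : 0 ≤ q) (h1 : q < 1) (k : ℕ) (β : ℕ → ℝ)
    (hβ0 : ∀ m, 0 ≤ β m) (hβ : ∀ m, β m ≤ (m:ℝ) + 2) :
    Summable (fun m : ℕ => (-q) ^ m * cf (β m) k) := by
  apply Summable.of_norm_bounded (summable_poly_geom k 2 h0 h1)
  intro m
  rw [norm_mul, norm_pow, norm_neg, Real.norm_eq_abs, Real.norm_eq_abs,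
    abs_of_nonneg h0, abs_of_nonneg (cf_nonneg (hβ0 m) k)]
  have h2 : (1:ℝ) ≤ (m:ℝ) + 2 := by linarith [Nat.cast_nonneg (α := ℝ) m]
  have := cf_le_geom (hβ0 m) (hβ m) h2 k
  have hqm : (0:ℝ) ≤ q ^ m := by positivity
  calc q ^ m * cf (β m) k ≤ q ^ m * ((m:ℝ)+2)^k := by nlinarith [cf_nonneg (hβ0 m) k]
    _ = ((m:ℝ)+2)^k * q ^ m := by ring


section UD

variable {α : ℝ} (hα : 0 < α) (hα1 : α < 1)

/-- discrete approximation of the Mittag-Leffler function -/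
noncomputable def ud (α q : ℝ) (k : ℕ) : ℝ := ∑' m : ℕ, (-q) ^ m * cf (α * m + 1) k

include hα hα1

lemma beta_bound1 : ∀ m : ℕ, 0 ≤ α * m + 1 :=
  fun m => by positivity

lemma beta_bound2 : ∀ m : ℕ, α * m + 1 ≤ (m:ℝ) + 2 := by
  intro m
  have hm : (0:ℝ) ≤ m := Nat.cast_nonneg m
  nlinarith

lemma summable_ud {q : ℝ} (h0 : 0 ≤ q) (h1 : q < 1) (k : ℕ) :
    Summable (fun m : ℕ => (-q) ^ m * cf (α * m + 1) k) :=
  summable_main h0 h1 k _ (beta_bound1 hα hα1) (beta_bound2 hα hα1)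

lemma summable_ud' {q : ℝ} (h0 : 0 ≤ q) (h1 : q < 1) (k : ℕ) (c : ℝ) (hc0 : 0 ≤ c)
    (hc1 : c ≤ 1) :
    Summable (fun m : ℕ => (-q) ^ m * cf (α * m + c) k) := by
  apply summable_main h0 h1 k
  · intro m; positivity
  · intro m
    have hm : (0:ℝ) ≤ m := Nat.cast_nonneg m
    nlinarith

/-- the first recursion: convolution with the coefficients of `(1-z)^α`. -/
lemma rec1 {q : ℝ} (h0 : 0 ≤ q) (h1 : q < 1) (n : ℕ) :
    ∑ j ∈ Finset.range (n + 1), cf (-α) j * ud α q (n - j)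
      = cf (1 - α) n - q * ud α q n := by
  have step1 : ∑ j ∈ Finset.range (n + 1), cf (-α) j * ud α q (n - j)
      = ∑ j ∈ Finset.range (n + 1), ∑' m : ℕ, cf (-α) j * ((-q) ^ m * cf (α * m + 1) (n - j)) := by
    apply Finset.sum_congr rfl
    intro j _
    rw [ud, tsum_mul_left]
  rw [step1, ← Summable.tsum_finsetSum (fun j _ => ((summable_ud hα hα1 h0 h1 (n - j)).mul_left _))]
  have step2 : ∀ m : ℕ,
      ∑ j ∈ Finset.range (n + 1), cf (-α) j * ((-q) ^ m * cf (α * m + 1) (n - j))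
      = (-q) ^ m * cf (α * m + (1 - α)) n := by
    intro m
    have := vandermonde (-α) (α * m + 1) n
    have e : -α + (α * m + 1) = α * m + (1 - α) := by ring
    rw [e] at this
    rw [← this, Finset.mul_sum]
    apply Finset.sum_congr rfl
    intro j _
    ring
  rw [tsum_congr step2]
  have hsum : Summable (fun m : ℕ => (-q) ^ m * cf (α * m + (1 - α)) n) :=
    summable_ud' hα hα1 h0 h1 n (1 - α) (by linarith) (by linarith)
  rw [Summable.tsum_eq_zero_add hsum]
  have e0 : (-q) ^ 0 * cf (α * (0:ℕ) + (1 - α)) n = cf (1 - α) n := by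
    norm_num
  rw [e0]
  have e1 : ∀ m : ℕ, (-q) ^ (m + 1) * cf (α * (m + 1 : ℕ) + (1 - α)) n
      = (-q) * ((-q) ^ m * cf (α * m + 1) n) := by
    intro m
    have e : α * ((m:ℝ) + 1) + (1 - α) = α * m + 1 := by ring
    push_cast
    rw [e, pow_succ]
    ring
  rw [tsum_congr e1, tsum_mul_left]
  rw [ud]
  ring

/-- the second recursion: convolution with the coefficients of `(1-z)^{-α}`. -/
lemma rec2 {q : ℝ} (h0 : 0 ≤ q) (h1 : q < 1) (n : ℕ) :
    ud α q n + q * ∑ l ∈ Finset.range (n + 1), cf α l * ud α q (n - l) = 1 := by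
  have step1 : ∑ l ∈ Finset.range (n + 1), cf α l * ud α q (n - l)
      = ∑ l ∈ Finset.range (n + 1), ∑' m : ℕ, cf α l * ((-q) ^ m * cf (α * m + 1) (n - l)) := by
    apply Finset.sum_congr rfl
    intro l _
    rw [ud, tsum_mul_left]
  rw [step1, ← Summable.tsum_finsetSum (fun l _ => ((summable_ud hα hα1 h0 h1 (n - l)).mul_left _))]
  have step2 : ∀ m : ℕ,
      ∑ l ∈ Finset.range (n + 1), cf α l * ((-q) ^ m * cf (α * m + 1) (n - l))
      = (-q) ^ m * cf (α * (m+1) + 1) n := by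
    intro m
    have := vandermonde α (α * m + 1) n
    have e : α + (α * m + 1) = α * (m+1) + 1 := by ring
    rw [e] at this
    rw [← this, Finset.mul_sum]
    apply Finset.sum_congr rfl
    intro l _
    ring
  rw [tsum_congr step2]
  -- now : ud α q n + q * ∑' m, (-q)^m cf (α(m+1)+1) n = 1
  have hud : ud α q n = 1 + ∑' m : ℕ, (-q) ^ (m+1) * cf (α * (m + 1 : ℕ) + 1) n := by
    rw [ud, Summable.tsum_eq_zero_add (summable_ud hα hα1 h0 h1 n)]
    norm_num
  rw [hud]
  have e1 : ∀ m : ℕ, (-q) ^ (m + 1) * cf (α * (m + 1 : ℕ) + 1) n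
      = (-q) * ((-q) ^ m * cf (α * ((m:ℝ)+1) + 1) n) := by
    intro m
    push_cast
    rw [pow_succ]
    ring
  rw [tsum_congr e1, tsum_mul_left]
  have e2 : ∀ m : ℕ, (-q) ^ m * cf (α * ((m:ℝ)+1) + 1) n
      = (-q) ^ m * cf (α * ((m+1:ℕ):ℝ) + 1) n := by
    intro m; push_cast; ring_nf
  rw [tsum_congr e2]
  ring

end UD

section Pos

variable {α : ℝ} (hα : 0 < α) (hα1 : α < 1)

include hα hα1 in
lemma cf_neg_nonpos (j : ℕ) : cf (-α) (j + 1) ≤ 0 := by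
  have : cf (-α) (j+1) = (∏ i ∈ Finset.range j, ((-α) + (i+1:ℕ)) / ((i+1:ℕ) + 1)) * ((-α + (0:ℕ)) / ((0:ℕ) + 1)) :=
    Finset.prod_range_succ' (fun i => ((-α) + i) / (i + 1)) j
  rw [this]
  have h1 : 0 ≤ ∏ i ∈ Finset.range j, ((-α) + (i+1:ℕ)) / ((i+1:ℕ) + 1) := by
    apply Finset.prod_nonneg
    intro i _
    have : (1:ℝ) ≤ (i:ℝ) + 1 := by linarith [Nat.cast_nonneg (α := ℝ) i]
    apply div_nonneg
    · push_cast; linarith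
    · push_cast; positivity
  have h2 : (-α + (0:ℕ)) / ((0:ℕ) + 1) = -α := by norm_num
  rw [h2]
  nlinarith

include hα hα1

lemma cf_telescope (n : ℕ) :
    cf (1 - α) n - cf (1 - α) (n + 1) = -(cf (-α) (n + 1)) := by
  induction n with
  | zero => simp [cf_one_arg]
  | succ n ih =>
    have A := succ_mul_cf (1 - α) (n + 1)
    have B := succ_mul_cf (-α) (n + 1)
    have C := succ_mul_cf (1 - α) n
    have h2 : ((n:ℝ) + 2) ≠ 0 := by positivity
    apply mul_left_cancel₀ h2
    push_cast at A B C ⊢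
    linear_combination (-1) * A + B + ((n:ℝ) + 1 - α) * ih + C

/-- solved form of the first recursion -/
lemma rec1' {q : ℝ} (h0 : 0 ≤ q) (h1 : q < 1) (n : ℕ) :
    (1 + q) * ud α q n
      = cf (1 - α) n + ∑ i ∈ Finset.range n, (-(cf (-α) (i+1))) * ud α q (n - (i+1)) := by
  have h := rec1 hα hα1 h0 h1 n
  rw [Finset.sum_range_succ' (fun j => cf (-α) j * ud α q (n - j))] at h
  simp only [cf_zero, one_mul, Nat.sub_zero] at h
  have : ∑ i ∈ Finset.range n, (-(cf (-α) (i+1))) * ud α q (n - (i+1))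
      = -∑ i ∈ Finset.range n, cf (-α) (i+1) * ud α q (n - (i+1)) := by
    rw [← Finset.sum_neg_distrib]
    apply Finset.sum_congr rfl
    intro i _
    ring
  rw [this]
  linarith

lemma ud_nonneg {q : ℝ} (h0 : 0 ≤ q) (h1 : q < 1) : ∀ n, 0 ≤ ud α q n := by
  intro n
  induction n using Nat.strong_induction_on with
  | _ n ih =>
    have h := rec1' hα hα1 h0 h1 n
    have hterm : 0 ≤ ∑ i ∈ Finset.range n, (-(cf (-α) (i+1))) * ud α q (n - (i+1)) := by
      apply Finset.sum_nonneg
      intro i hi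
      have hi' : i < n := Finset.mem_range.mp hi
      apply mul_nonneg
      · linarith [cf_neg_nonpos hα hα1 i]
      · exact ih _ (by omega)
    have hcf : 0 ≤ cf (1 - α) n := cf_nonneg (by linarith) n
    nlinarith

lemma ud_zero_eq {q : ℝ} (h0 : 0 ≤ q) (h1 : q < 1) : ud α q 0 = (1 + q)⁻¹ := by
  have h := rec1' hα hα1 h0 h1 0
  simp only [Finset.range_zero, Finset.sum_empty, add_zero, cf_zero] at h
  have : (1 + q) ≠ 0 := by positivity
  field_simp at h ⊢
  linarith

lemma ud_succ_le {q : ℝ} (h0 : 0 ≤ q) (h1 : q < 1) : ∀ n, ud α q (n+1) ≤ ud α q n := by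
  intro n
  induction n using Nat.strong_induction_on with
  | _ n ih =>
    have hn := rec1' hα hα1 h0 h1 n
    have hn1 := rec1' hα hα1 h0 h1 (n+1)
    rw [Finset.sum_range_succ (fun i => (-(cf (-α) (i+1))) * ud α q (n + 1 - (i+1)))] at hn1
    have e0 : (n + 1 - (n + 1) : ℕ) = 0 := by omega
    rw [e0] at hn1
    have key : (1 + q) * ud α q n - (1 + q) * ud α q (n+1)
        = (-(cf (-α) (n+1))) * (1 - ud α q 0)
          + ∑ i ∈ Finset.range n,
              (-(cf (-α) (i+1))) * (ud α q (n - (i+1)) - ud α q ((n - (i+1)) + 1)) := by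
      rw [hn, hn1]
      have e1 : ∑ i ∈ Finset.range n, (-(cf (-α) (i+1))) * ud α q (n + 1 - (i+1))
          = ∑ i ∈ Finset.range n, (-(cf (-α) (i+1))) * ud α q ((n - (i+1)) + 1) := by
        apply Finset.sum_congr rfl
        intro i hi
        have hi' : i < n := Finset.mem_range.mp hi
        have : (n + 1 - (i+1) : ℕ) = (n - (i+1)) + 1 := by omega
        rw [this]
      rw [e1]
      have e2 : cf (1 - α) n - cf (1 - α) (n+1) = -(cf (-α) (n+1)) := cf_telescope hα hα1 n
      have e3 : ∑ i ∈ Finset.range n,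
          (-(cf (-α) (i+1))) * (ud α q (n - (i+1)) - ud α q ((n - (i+1)) + 1))
          = ∑ i ∈ Finset.range n, (-(cf (-α) (i+1))) * ud α q (n - (i+1))
            - ∑ i ∈ Finset.range n, (-(cf (-α) (i+1))) * ud α q ((n - (i+1)) + 1) := by
        rw [← Finset.sum_sub_distrib]
        apply Finset.sum_congr rfl
        intro i _
        ring
      linear_combination e2 - e3
    have hud0 : ud α q 0 ≤ 1 := by
      rw [ud_zero_eq hα hα1 h0 h1]
      rw [inv_le_one_iff₀]
      right; linarith
    have hterm1 : 0 ≤ (-(cf (-α) (n+1))) * (1 - ud α q 0) := by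
      apply mul_nonneg
      · linarith [cf_neg_nonpos hα hα1 n]
      · linarith
    have hterm2 : 0 ≤ ∑ i ∈ Finset.range n,
        (-(cf (-α) (i+1))) * (ud α q (n - (i+1)) - ud α q ((n - (i+1)) + 1)) := by
      apply Finset.sum_nonneg
      intro i hi
      have hi' : i < n := Finset.mem_range.mp hi
      apply mul_nonneg
      · linarith [cf_neg_nonpos hα hα1 i]
      · have := ih (n - (i+1)) (by omega)
        linarith
    nlinarith

lemma ud_antitone {q : ℝ} (h0 : 0 ≤ q) (h1 : q < 1) : Antitone (ud α q) :=
  antitone_nat_of_succ_le (ud_succ_le hα hα1 h0 h1)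

lemma ud_le_one {q : ℝ} (h0 : 0 ≤ q) (h1 : q < 1) (n : ℕ) : ud α q n ≤ 1 := by
  have h := ud_antitone hα hα1 h0 h1 (Nat.zero_le n)
  have h2 : ud α q 0 ≤ 1 := by
    rw [ud_zero_eq hα hα1 h0 h1, inv_le_one_iff₀]
    right; linarith
  linarith

end Pos

section Euler

-- step inequalities from Bernoulli
lemma rpow_step_ge {β : ℝ} (hβ : 1 ≤ β) (k : ℕ) (hk : 1 ≤ k) :
    (β + k) * (k:ℝ) ^ (β - 1) ≤ ((k:ℝ) + 1) ^ β := by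
  have hk0 : (0:ℝ) < k := by exact_mod_cast hk
  have h1 : ((k:ℝ) + 1) ^ β = (k:ℝ) ^ β * (1 + 1/(k:ℝ)) ^ β := by
    rw [← Real.mul_rpow (le_of_lt hk0) (by positivity)]
    congr 1
    field_simp
  have h2 : 1 + β * (1/(k:ℝ)) ≤ (1 + 1/(k:ℝ)) ^ β :=
    one_add_mul_self_le_rpow_one_add
      (le_trans (by norm_num : (-1:ℝ) ≤ 0) (by positivity : (0:ℝ) ≤ 1/(k:ℝ))) hβ
  have h3 : (k:ℝ) ^ β = (k:ℝ) ^ (β - 1) * k := by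
    nth_rewrite 1 [show β = (β - 1) + 1 by ring]
    rw [Real.rpow_add hk0, Real.rpow_one]
  have h4 : (0:ℝ) < (k:ℝ) ^ β := Real.rpow_pos_of_pos hk0 β
  calc (β + k) * (k:ℝ) ^ (β - 1) = (k:ℝ) ^ β * (1 + β * (1/(k:ℝ))) := by
        rw [h3]; field_simp; ring
    _ ≤ (k:ℝ) ^ β * (1 + 1/(k:ℝ)) ^ β := by nlinarith
    _ = ((k:ℝ) + 1) ^ β := h1.symm

lemma rpow_step_le {β : ℝ} (hβ0 : 0 ≤ β) (hβ : β ≤ 1) (k : ℕ) (hk : 1 ≤ k) :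
    ((k:ℝ) + 1) ^ β ≤ (β + k) * (k:ℝ) ^ (β - 1) := by
  have hk0 : (0:ℝ) < k := by exact_mod_cast hk
  have h1 : ((k:ℝ) + 1) ^ β = (k:ℝ) ^ β * (1 + 1/(k:ℝ)) ^ β := by
    rw [← Real.mul_rpow (le_of_lt hk0) (by positivity)]
    congr 1
    field_simp
  have h2 : (1 + 1/(k:ℝ)) ^ β ≤ 1 + β * (1/(k:ℝ)) :=
    rpow_one_add_le_one_add_mul_self
      (le_trans (by norm_num : (-1:ℝ) ≤ 0) (by positivity : (0:ℝ) ≤ 1/(k:ℝ))) hβ0 hβ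
  have h3 : (k:ℝ) ^ β = (k:ℝ) ^ (β - 1) * k := by
    nth_rewrite 1 [show β = (β - 1) + 1 by ring]
    rw [Real.rpow_add hk0, Real.rpow_one]
  have h4 : (0:ℝ) < (k:ℝ) ^ β := Real.rpow_pos_of_pos hk0 β
  calc ((k:ℝ) + 1) ^ β = (k:ℝ) ^ β * (1 + 1/(k:ℝ)) ^ β := h1
    _ ≤ (k:ℝ) ^ β * (1 + β * (1/(k:ℝ))) := by nlinarith
    _ = (β + k) * (k:ℝ) ^ (β - 1) := by rw [h3]; field_simp; ring

/-- ratio sequence -/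
noncomputable def Rq (β : ℝ) (k : ℕ) : ℝ := cf β (k+1) / ((k+1:ℕ):ℝ) ^ (β - 1)

lemma Rq_zero (β : ℝ) : Rq β 0 = β := by
  simp [Rq, cf_one_arg]

lemma Rq_antitone {β : ℝ} (hβ : 1 ≤ β) : Antitone (Rq β) := by
  apply antitone_nat_of_succ_le
  intro k
  have hk1 : (0:ℝ) < ((k+1:ℕ):ℝ) := by positivity
  have hk2 : (0:ℝ) < ((k+2:ℕ):ℝ) := by positivity
  have hp1 : (0:ℝ) < ((k+1:ℕ):ℝ) ^ (β - 1) := Real.rpow_pos_of_pos hk1 _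
  have hp2 : (0:ℝ) < ((k+2:ℕ):ℝ) ^ (β - 1) := Real.rpow_pos_of_pos hk2 _
  rw [Rq, Rq, div_le_div_iff₀ hp2 hp1]
  have hcf : cf β (k+2) = cf β (k+1) * ((β + (k+1:ℕ)) / ((k+1:ℕ) + 1)) := cf_succ β (k+1)
  rw [hcf]
  have hstep := rpow_step_ge hβ (k+1) (by omega)
  -- (β + (k+1)) * (k+1)^(β-1) ≤ (k+2)^β
  have hcast : ((k+1:ℕ):ℝ) + 1 = ((k+2:ℕ):ℝ) := by push_cast; ring
  rw [hcast] at hstep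
  have hrw : ((k+2:ℕ):ℝ) ^ β = ((k+2:ℕ):ℝ) ^ (β - 1) * ((k+2:ℕ):ℝ) := by
    nth_rewrite 1 [show β = (β - 1) + 1 by ring]
    rw [Real.rpow_add hk2, Real.rpow_one]
  rw [hrw] at hstep
  have hcfpos : 0 ≤ cf β (k+1) := cf_nonneg (by linarith) _
  have hD : (0:ℝ) < ((k+1:ℕ):ℝ) + 1 := by positivity
  rw [show cf β (k+1) * ((β + ((k+1:ℕ):ℝ)) / (((k+1:ℕ):ℝ) + 1)) * ((k+1:ℕ):ℝ) ^ (β-1)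
      = cf β (k+1) * ((β + ((k+1:ℕ):ℝ)) * ((k+1:ℕ):ℝ) ^ (β-1)) / (((k+1:ℕ):ℝ) + 1) by ring]
  rw [div_le_iff₀ hD]
  have h5 := mul_le_mul_of_nonneg_left hstep hcfpos
  calc cf β (k+1) * ((β + ((k+1:ℕ):ℝ)) * ((k+1:ℕ):ℝ) ^ (β-1))
      ≤ cf β (k+1) * (((k+2:ℕ):ℝ) ^ (β - 1) * ((k+2:ℕ):ℝ)) := h5
    _ = cf β (k+1) * ((k+2:ℕ):ℝ) ^ (β-1) * (((k+1:ℕ):ℝ) + 1) := by rw [← hcast]; ring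

lemma Rq_monotone {β : ℝ} (hβ0 : 0 < β) (hβ : β ≤ 1) : Monotone (Rq β) := by
  apply monotone_nat_of_le_succ
  intro k
  have hk1 : (0:ℝ) < ((k+1:ℕ):ℝ) := by positivity
  have hk2 : (0:ℝ) < ((k+2:ℕ):ℝ) := by positivity
  have hp1 : (0:ℝ) < ((k+1:ℕ):ℝ) ^ (β - 1) := Real.rpow_pos_of_pos hk1 _
  have hp2 : (0:ℝ) < ((k+2:ℕ):ℝ) ^ (β - 1) := Real.rpow_pos_of_pos hk2 _
  rw [Rq, Rq, div_le_div_iff₀ hp1 hp2]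
  have hcf : cf β (k+2) = cf β (k+1) * ((β + (k+1:ℕ)) / ((k+1:ℕ) + 1)) := cf_succ β (k+1)
  rw [hcf]
  have hstep := rpow_step_le (le_of_lt hβ0) hβ (k+1) (by omega)
  have hcast : ((k+1:ℕ):ℝ) + 1 = ((k+2:ℕ):ℝ) := by push_cast; ring
  rw [hcast] at hstep
  have hrw : ((k+2:ℕ):ℝ) ^ β = ((k+2:ℕ):ℝ) ^ (β - 1) * ((k+2:ℕ):ℝ) := by
    nth_rewrite 1 [show β = (β - 1) + 1 by ring]
    rw [Real.rpow_add hk2, Real.rpow_one]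
  rw [hrw] at hstep
  have hcfpos : 0 ≤ cf β (k+1) := cf_nonneg (by linarith) _
  have hD : (0:ℝ) < ((k+1:ℕ):ℝ) + 1 := by positivity
  rw [show cf β (k+1) * ((β + ((k+1:ℕ):ℝ)) / (((k+1:ℕ):ℝ) + 1)) * ((k+1:ℕ):ℝ) ^ (β-1)
      = cf β (k+1) * ((β + ((k+1:ℕ):ℝ)) * ((k+1:ℕ):ℝ) ^ (β-1)) / (((k+1:ℕ):ℝ) + 1) by ring]
  rw [le_div_iff₀ hD]
  have h5 := mul_le_mul_of_nonneg_left hstep hcfpos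
  calc cf β (k+1) * ((k+2:ℕ):ℝ) ^ (β-1) * (((k+1:ℕ):ℝ) + 1)
      = cf β (k+1) * (((k+2:ℕ):ℝ) ^ (β-1) * ((k+2:ℕ):ℝ)) := by rw [← hcast]; ring
    _ ≤ cf β (k+1) * ((β + ((k+1:ℕ):ℝ)) * ((k+1:ℕ):ℝ) ^ (β-1)) := h5


lemma Rq_tendsto {β : ℝ} (hβ0 : 0 < β) :
    Filter.Tendsto (Rq β) Filter.atTop (nhds (Real.Gamma β)⁻¹) := by
  have hΓ : 0 < Real.Gamma β := Real.Gamma_pos_of_pos hβ0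
  have key : ∀ n : ℕ, 1 ≤ n →
      cf β n / (n:ℝ) ^ (β - 1) = ((n:ℝ) / (β + n)) * (Real.GammaSeq β n)⁻¹ := by
    intro n hn
    have hn0 : (0:ℝ) < n := by exact_mod_cast hn
    have hP : (0:ℝ) < ∏ i ∈ Finset.range n, (β + (i:ℝ)) :=
      Finset.prod_pos (fun i _ => by positivity)
    have hfact : ∏ i ∈ Finset.range n, ((i:ℝ) + 1) = (n.factorial : ℝ) := by
      calc ∏ i ∈ Finset.range n, ((i:ℝ) + 1)
          = ((∏ i ∈ Finset.range n, (i + 1) : ℕ) : ℝ) := by push_cast; rfl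
        _ = (n.factorial : ℝ) := by rw [Finset.prod_range_add_one_eq_factorial]
    have hcf : cf β n = (∏ i ∈ Finset.range n, (β + (i:ℝ))) / (n.factorial : ℝ) := by
      rw [cf, Finset.prod_div_distrib, hfact]
    have hGseq : Real.GammaSeq β n
        = (n:ℝ) ^ β * (n.factorial : ℝ) / ((∏ i ∈ Finset.range n, (β + (i:ℝ))) * (β + n)) := by
      rw [Real.GammaSeq, Finset.prod_range_succ]
    have hrpow : (n:ℝ) ^ β = (n:ℝ) ^ (β - 1) * n := by
      nth_rewrite 1 [show β = (β - 1) + 1 by ring]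
      rw [Real.rpow_add hn0, Real.rpow_one]
    have hne1 : (n.factorial : ℝ) ≠ 0 := by
      exact_mod_cast n.factorial_ne_zero
    have hne2 : (∏ i ∈ Finset.range n, (β + (i:ℝ))) ≠ 0 := ne_of_gt hP
    have hne3 : (β + (n:ℝ)) ≠ 0 := by positivity
    have hne4 : (n:ℝ) ^ (β - 1) ≠ 0 := ne_of_gt (Real.rpow_pos_of_pos hn0 _)
    rw [hcf, hGseq, hrpow]
    field_simp
  have keyR : ∀ k : ℕ, Rq β k = (((k+1:ℕ):ℝ) / (β + ((k+1:ℕ):ℝ))) * (Real.GammaSeq β (k+1))⁻¹ :=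
    fun k => key (k+1) (by omega)
  have h1 : Filter.Tendsto (fun k : ℕ => (((k+1:ℕ):ℝ) / (β + ((k+1:ℕ):ℝ)))) Filter.atTop (nhds 1) := by
    have base : Filter.Tendsto (fun n : ℕ => ((n:ℝ) / ((n:ℝ) + β))) Filter.atTop (nhds 1) :=
      tendsto_natCast_div_add_atTop β
    have : (fun k : ℕ => (((k+1:ℕ):ℝ) / (β + ((k+1:ℕ):ℝ))))
        = (fun n : ℕ => ((n:ℝ) / ((n:ℝ) + β))) ∘ (fun k => k + 1) := by
      funext k
      simp only [Function.comp_apply]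
      rw [add_comm β _]
    rw [this]
    exact base.comp (Filter.tendsto_add_atTop_nat 1)
  have h2 : Filter.Tendsto (fun k : ℕ => (Real.GammaSeq β (k+1))⁻¹) Filter.atTop
      (nhds (Real.Gamma β)⁻¹) := by
    have := (Real.GammaSeq_tendsto_Gamma β).comp (Filter.tendsto_add_atTop_nat 1)
    exact this.inv₀ (ne_of_gt hΓ)
  have := h1.mul h2
  rw [one_mul] at this
  apply this.congr
  intro k
  rw [keyR]

lemma cf_lower {β : ℝ} (hβ : 1 ≤ β) (k : ℕ) :
    ((k+1:ℕ):ℝ) ^ (β - 1) * (Real.Gamma β)⁻¹ ≤ cf β (k+1) := by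
  have h := (Rq_antitone hβ).le_of_tendsto (Rq_tendsto (by linarith)) k
  rw [Rq] at h
  have hp : (0:ℝ) < ((k+1:ℕ):ℝ) ^ (β - 1) := Real.rpow_pos_of_pos (by positivity) _
  rw [le_div_iff₀ hp] at h
  linarith

lemma cf_upper_small {β : ℝ} (hβ0 : 0 < β) (hβ : β ≤ 1) (k : ℕ) :
    cf β (k+1) ≤ ((k+1:ℕ):ℝ) ^ (β - 1) * (Real.Gamma β)⁻¹ := by
  have h := (Rq_monotone hβ0 hβ).ge_of_tendsto (Rq_tendsto hβ0) k
  rw [Rq] at h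
  have hp : (0:ℝ) < ((k+1:ℕ):ℝ) ^ (β - 1) := Real.rpow_pos_of_pos (by positivity) _
  rw [div_le_iff₀ hp] at h
  linarith

lemma cf_upper_big {β : ℝ} (hβ : 1 ≤ β) (k : ℕ) :
    cf β (k+1) ≤ β * ((k+1:ℕ):ℝ) ^ (β - 1) := by
  have h := Rq_antitone hβ (Nat.zero_le k)
  rw [Rq_zero, Rq] at h
  have hp : (0:ℝ) < ((k+1:ℕ):ℝ) ^ (β - 1) := Real.rpow_pos_of_pos (by positivity) _
  rw [div_le_iff₀ hp] at h
  linarith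

end Euler

section Limit

variable {α : ℝ} (hα : 0 < α) (hα1 : α < 1)

/-- the Mittag-Leffler function at `-x` -/
noncomputable def EML (α x : ℝ) : ℝ := ∑' m : ℕ, (-x) ^ m / Real.Gamma (α * m + 1)

include hα hα1

lemma ud_term_tendsto {y : ℝ} (hy : 0 ≤ y) (m : ℕ) :
    Filter.Tendsto (fun k : ℕ => (-(y / (k:ℝ) ^ α)) ^ m * cf (α * m + 1) k)
      Filter.atTop (nhds ((-y) ^ m / Real.Gamma (α * m + 1))) := by
  rw [← Filter.tendsto_add_atTop_iff_nat 1]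
  have hβ : (0:ℝ) < α * m + 1 := by positivity
  have congrfun : ∀ j : ℕ, (-y) ^ m * Rq (α * m + 1) j
      = (-(y / ((j+1:ℕ):ℝ) ^ α)) ^ m * cf (α * m + 1) (j+1) := by
    intro j
    have hc : (0:ℝ) < ((j+1:ℕ):ℝ) ^ α := Real.rpow_pos_of_pos (by positivity) _
    have hcm : (((j+1:ℕ):ℝ) ^ α) ^ m = ((j+1:ℕ):ℝ) ^ (α * m) := by
      rw [← Real.rpow_natCast (((j+1:ℕ):ℝ) ^ α) m, ← Real.rpow_mul (by positivity)]
    have e1 : (-(y / ((j+1:ℕ):ℝ) ^ α)) ^ m = (-y) ^ m / (((j+1:ℕ):ℝ) ^ α) ^ m := by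
      rw [← neg_div, div_pow]
    rw [e1, hcm, Rq]
    have e2 : α * (m:ℝ) + 1 - 1 = α * m := by ring
    rw [e2]
    ring
  apply Filter.Tendsto.congr congrfun
  have := (Rq_tendsto hβ).const_mul ((-y) ^ m)
  have e3 : (-y) ^ m * (Real.Gamma (α * m + 1))⁻¹ = (-y) ^ m / Real.Gamma (α * m + 1) := by
    rw [div_eq_mul_inv]
  rwa [e3] at this

lemma ud_term_bound {y : ℝ} (hy : 0 ≤ y) {N k : ℕ} (hN : 1 ≤ N) (hkN : N ≤ k) (m : ℕ) :
    ‖(-(y / (k:ℝ) ^ α)) ^ m * cf (α * m + 1) k‖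
      ≤ y ^ m * (cf (α * m + 1) N / (N:ℝ) ^ (α * m)) := by
  have hk1 : 1 ≤ k := le_trans hN hkN
  have hβ1 : (1:ℝ) ≤ α * m + 1 := by
    have := mul_nonneg hα.le (Nat.cast_nonneg (α := ℝ) m)
    linarith
  have hk0 : (0:ℝ) < k := by exact_mod_cast hk1
  have hc : (0:ℝ) < (k:ℝ) ^ α := Real.rpow_pos_of_pos hk0 _
  have hcm : (((k:ℕ):ℝ) ^ α) ^ m = ((k:ℕ):ℝ) ^ (α * m) := by
    rw [← Real.rpow_natCast (((k:ℕ):ℝ) ^ α) m, ← Real.rpow_mul (by positivity)]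
  have hcf0 : 0 ≤ cf (α * m + 1) k := cf_nonneg (by positivity) k
  -- norm computation
  have e1 : ‖(-(y / (k:ℝ) ^ α)) ^ m * cf (α * m + 1) k‖
      = (y / (k:ℝ) ^ α) ^ m * cf (α * m + 1) k := by
    rw [norm_mul, norm_pow, norm_neg, Real.norm_eq_abs, Real.norm_eq_abs,
      abs_of_nonneg (by positivity : (0:ℝ) ≤ y / (k:ℝ) ^ α), abs_of_nonneg hcf0]
  rw [e1, div_pow, hcm]
  -- Rq antitone comparison
  have hmono := Rq_antitone hβ1 (show N - 1 ≤ k - 1 by omega)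
  have eN : (N - 1) + 1 = N := by omega
  have ek : (k - 1) + 1 = k := by omega
  rw [Rq, Rq, eN, ek] at hmono
  have e2 : α * (m:ℝ) + 1 - 1 = α * m := by ring
  rw [e2] at hmono
  -- hmono : cf (α*m+1) k / k^(α*m) ≤ cf (α*m+1) N / N^(α*m)
  have hym : (0:ℝ) ≤ y ^ m := by positivity
  have hkam : (0:ℝ) < (k:ℝ) ^ (α * m) := Real.rpow_pos_of_pos hk0 _
  calc y ^ m / (k:ℝ) ^ (α * m) * cf (α * m + 1) k
      = y ^ m * (cf (α * m + 1) k / (k:ℝ) ^ (α * m)) := by ring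
    _ ≤ y ^ m * (cf (α * m + 1) N / (N:ℝ) ^ (α * m)) := by
        apply mul_le_mul_of_nonneg_left hmono hym

lemma D_summable {y : ℝ} (hy : 0 ≤ y) {N : ℕ} (hN1 : 1 ≤ N) (hNy : y + 1 ≤ (N:ℝ) ^ α) :
    Summable (fun m : ℕ => y ^ m * (cf (α * m + 1) N / (N:ℝ) ^ (α * m))) := by
  have hN0 : (0:ℝ) < N := by exact_mod_cast hN1
  have hNa : (0:ℝ) < (N:ℝ) ^ α := Real.rpow_pos_of_pos hN0 _
  set r : ℝ := y / (N:ℝ) ^ α with hr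
  have hr0 : 0 ≤ r := by positivity
  have hr1 : r < 1 := by
    rw [hr, div_lt_one hNa]
    linarith
  apply Summable.of_nonneg_of_le (f := fun m : ℕ => ((m:ℝ) + 2) ^ N * r ^ m)
  · intro m
    have hX : (0:ℝ) < (N:ℝ) ^ (α * m) := Real.rpow_pos_of_pos hN0 _
    have hcf0 : 0 ≤ cf (α * m + 1) N := cf_nonneg (by positivity) N
    positivity
  · intro m
    have hNam : (((N:ℕ):ℝ) ^ α) ^ m = ((N:ℕ):ℝ) ^ (α * m) := by
      rw [← Real.rpow_natCast (((N:ℕ):ℝ) ^ α) m, ← Real.rpow_mul (by positivity)]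
    have h2 : (1:ℝ) ≤ (m:ℝ) + 2 := by linarith [Nat.cast_nonneg (α := ℝ) m]
    have hβ2 : α * (m:ℝ) + 1 ≤ (m:ℝ) + 2 := by
      have hm : (0:ℝ) ≤ m := Nat.cast_nonneg m
      nlinarith
    have hcf := cf_le_geom (by positivity : (0:ℝ) ≤ α * m + 1) hβ2 h2 N
    have hNm : (0:ℝ) < (N:ℝ) ^ (α * m) := Real.rpow_pos_of_pos hN0 _
    calc y ^ m * (cf (α * m + 1) N / (N:ℝ) ^ (α * m))
        = cf (α * m + 1) N * y ^ m / (N:ℝ) ^ (α * m) := by ring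
      _ ≤ ((m:ℝ) + 2) ^ N * y ^ m / (N:ℝ) ^ (α * m) := by gcongr
      _ = ((m:ℝ) + 2) ^ N * r ^ m := by rw [hr, div_pow, hNam]; ring
  · exact summable_poly_geom N 2 hr0 hr1

/-- main limit lemma: the discrete scheme converges to the Mittag-Leffler function -/
lemma ud_tendsto {y : ℝ} (hy : 0 ≤ y) :
    Filter.Tendsto (fun k : ℕ => ud α (y / (k:ℝ) ^ α) k) Filter.atTop (nhds (EML α y)) := by
  obtain ⟨N, hNy, hN1⟩ : ∃ N : ℕ, y + 1 ≤ (N:ℝ) ^ α ∧ 1 ≤ N := by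
    have h1 : Filter.Tendsto (fun n : ℕ => (n:ℝ) ^ α) Filter.atTop Filter.atTop :=
      (tendsto_rpow_atTop hα).comp tendsto_natCast_atTop_atTop
    exact ((h1.eventually_ge_atTop (y + 1)).and (Filter.eventually_ge_atTop 1)).exists
  unfold ud EML
  apply tendsto_tsum_of_dominated_convergence (D_summable hα hα1 hy hN1 hNy)
  · exact ud_term_tendsto hα hα1 hy
  · filter_upwards [Filter.eventually_ge_atTop N] with k hk m
    exact ud_term_bound hα hα1 hy hN1 hk m

end Limit

section Upper

variable {α : ℝ} (hα : 0 < α) (hα1 : α < 1)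

lemma sum_cf_alpha (N : ℕ) :
    ∑ l ∈ Finset.range (N + 1), cf α l = cf (1 + α) N := by
  have h := vandermonde α 1 N
  rw [show α + 1 = 1 + α by ring] at h
  rw [← h]
  apply Finset.sum_congr rfl
  intro l _
  rw [cf_one, mul_one]

include hα hα1

lemma ud_upper {q : ℝ} (h0 : 0 ≤ q) (h1 : q < 1) (N : ℕ) :
    ud α q N * (1 + q * cf (1 + α) N) ≤ 1 := by
  have h := rec2 hα hα1 h0 h1 N
  have hmono : ∀ l ∈ Finset.range (N + 1), cf α l * ud α q N ≤ cf α l * ud α q (N - l) := by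
    intro l hl
    apply mul_le_mul_of_nonneg_left _ (cf_nonneg hα.le l)
    exact ud_antitone hα hα1 h0 h1 (Nat.sub_le N l)
  have hsum : cf (1 + α) N * ud α q N ≤ ∑ l ∈ Finset.range (N + 1), cf α l * ud α q (N - l) := by
    calc cf (1 + α) N * ud α q N = ∑ l ∈ Finset.range (N + 1), cf α l * ud α q N := by
          rw [← Finset.sum_mul, sum_cf_alpha]
      _ ≤ _ := Finset.sum_le_sum hmono
  nlinarith [mul_le_mul_of_nonneg_left hsum h0]

lemma Gamma_one_add_le_one : Real.Gamma (1 + α) ≤ 1 := by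
  have h := (Rq_monotone hα hα1.le).ge_of_tendsto (Rq_tendsto hα) 0
  rw [Rq_zero] at h
  have hΓ : 0 < Real.Gamma α := Real.Gamma_pos_of_pos hα
  have : α * Real.Gamma α ≤ 1 := by
    have h2 := mul_le_mul_of_nonneg_right h hΓ.le
    rwa [inv_mul_cancel₀ (ne_of_gt hΓ)] at h2
  rw [show (1:ℝ) + α = α + 1 by ring, Real.Gamma_add_one (ne_of_gt hα)]
  exact this

lemma eventually_q {x : ℝ} (hx : 0 ≤ x) :
    ∀ᶠ k : ℕ in Filter.atTop, 0 ≤ x / (k:ℝ) ^ α ∧ x / (k:ℝ) ^ α < 1 ∧ 1 ≤ k := by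
  have h1 : Filter.Tendsto (fun n : ℕ => (n:ℝ) ^ α) Filter.atTop Filter.atTop :=
    (tendsto_rpow_atTop hα).comp tendsto_natCast_atTop_atTop
  filter_upwards [h1.eventually_ge_atTop (x + 1), Filter.eventually_ge_atTop 1] with k hk hk1
  have hka : (0:ℝ) < (k:ℝ) ^ α := by
    have : (0:ℝ) < k := by exact_mod_cast hk1
    exact Real.rpow_pos_of_pos this α
  refine ⟨by positivity, ?_, hk1⟩
  rw [div_lt_one hka]
  linarith

lemma EML_nonneg {x : ℝ} (hx : 0 ≤ x) : 0 ≤ EML α x := by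
  apply ge_of_tendsto (ud_tendsto hα hα1 hx)
  filter_upwards [eventually_q hα hα1 hx] with k ⟨h0, h1, _⟩
  exact ud_nonneg hα hα1 h0 h1 k

lemma qcf_tendsto {x : ℝ} (hx : 0 ≤ x) :
    Filter.Tendsto (fun k : ℕ => (x / (k:ℝ) ^ α) * cf (1 + α) k) Filter.atTop
      (nhds (x * (Real.Gamma (1 + α))⁻¹)) := by
  rw [← Filter.tendsto_add_atTop_iff_nat 1]
  have congrfun : ∀ j : ℕ, x * Rq (1 + α) j
      = (x / ((j+1:ℕ):ℝ) ^ α) * cf (1 + α) (j+1) := by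
    intro j
    rw [Rq, show (1:ℝ) + α - 1 = α by ring]
    ring
  apply Filter.Tendsto.congr congrfun
  exact (Rq_tendsto (by linarith)).const_mul x

lemma EML_upper {x : ℝ} (hx : 0 ≤ x) :
    EML α x * (1 + x * (Real.Gamma (1 + α))⁻¹) ≤ 1 := by
  have t1 := ud_tendsto hα hα1 hx
  have t2 := (qcf_tendsto hα hα1 hx).const_add 1
  have t3 := t1.mul t2
  apply le_of_tendsto t3
  filter_upwards [eventually_q hα hα1 hx] with k ⟨h0, h1, _⟩
  exact ud_upper hα hα1 h0 h1 k

lemma EML_upper' {x : ℝ} (hx : 0 ≤ x) :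
    EML α x * (1 + x) ≤ (Real.Gamma (1 + α))⁻¹ := by
  have hΓ : 0 < Real.Gamma (1 + α) := Real.Gamma_pos_of_pos (by linarith)
  have hg1 : 1 ≤ (Real.Gamma (1 + α))⁻¹ := by
    rw [le_inv_comm₀ (by norm_num) hΓ]
    simpa using Gamma_one_add_le_one hα hα1
  have h := EML_upper hα hα1 hx
  have hE := EML_nonneg hα hα1 hx
  have : EML α x * (1 + x) ≤ EML α x * (1 + x * (Real.Gamma (1 + α))⁻¹) := by
    apply mul_le_mul_of_nonneg_left _ hE
    nlinarith
  calc EML α x * (1 + x) ≤ 1 := le_trans this h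
    _ ≤ (Real.Gamma (1 + α))⁻¹ := hg1

end Upper

section LowerPrep

variable {α : ℝ} (hα : 0 < α) (hα1 : α < 1)

include hα hα1

lemma cf_alpha_antitone : Antitone (cf α) := by
  apply antitone_nat_of_succ_le
  intro k
  rw [cf_succ]
  have h1 : (α + k) / (k + 1) ≤ 1 := by
    rw [div_le_one (by positivity)]
    linarith
  have h2 : 0 ≤ cf α k := cf_nonneg hα.le k
  have h3 : 0 ≤ (α + k) / (k + 1) := by positivity
  nlinarith

lemma discrete_split {q : ℝ} (h0 : 0 ≤ q) (h1 : q < 1) {P n : ℕ} (hP : 1 ≤ P) (hPn : P < n) :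
    1 ≤ ud α q n + q * (cf α (n - P) * (∑ i ∈ Finset.range P, ud α q i))
        + q * (ud α q P * cf (1 + α) (n - P)) := by
  have h := rec2 hα hα1 h0 h1 n
  -- reflect the sum
  have hrefl : ∑ l ∈ Finset.range (n + 1), cf α l * ud α q (n - l)
      = ∑ i ∈ Finset.range (n + 1), cf α (n - i) * ud α q i := by
    rw [← Finset.sum_range_reflect (fun i => cf α (n - i) * ud α q i) (n+1)]
    apply Finset.sum_congr rfl
    intro l hl
    have hl' : l ≤ n := by have := Finset.mem_range.mp hl; omega
    have e1 : n - (n + 1 - 1 - l) = l := by omega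
    have e2 : (n + 1 - 1 - l) = n - l := by omega
    rw [e1, e2]
  rw [hrefl] at h
  -- split the sum at P
  have hsplit : ∑ i ∈ Finset.range (n + 1), cf α (n - i) * ud α q i
      = (∑ i ∈ Finset.range P, cf α (n - i) * ud α q i)
        + ∑ i ∈ Finset.Ico P (n + 1), cf α (n - i) * ud α q i := by
    rw [Finset.range_eq_Ico, ← Finset.sum_Ico_consecutive _ (Nat.zero_le P) (by omega : P ≤ n + 1), ← Finset.range_eq_Ico]
  rw [hsplit] at h
  -- piece 1
  have hpiece1 : ∑ i ∈ Finset.range P, cf α (n - i) * ud α q i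
      ≤ cf α (n - P) * ∑ i ∈ Finset.range P, ud α q i := by
    rw [Finset.mul_sum]
    apply Finset.sum_le_sum
    intro i hi
    have hi' : i < P := Finset.mem_range.mp hi
    apply mul_le_mul_of_nonneg_right _ (ud_nonneg hα hα1 h0 h1 i)
    exact cf_alpha_antitone hα hα1 (by omega : n - P ≤ n - i)
  -- piece 2
  have hpiece2 : ∑ i ∈ Finset.Ico P (n + 1), cf α (n - i) * ud α q i
      ≤ ud α q P * cf (1 + α) (n - P) := by
    have step1 : ∑ i ∈ Finset.Ico P (n + 1), cf α (n - i) * ud α q i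
        ≤ ∑ i ∈ Finset.Ico P (n + 1), cf α (n - i) * ud α q P := by
      apply Finset.sum_le_sum
      intro i hi
      have hi' : P ≤ i := (Finset.mem_Ico.mp hi).1
      exact mul_le_mul_of_nonneg_left (ud_antitone hα hα1 h0 h1 hi') (cf_nonneg hα.le _)
    have step2 : ∑ i ∈ Finset.Ico P (n + 1), cf α (n - i)
        = ∑ j ∈ Finset.range (n - P + 1), cf α (n - (P + j)) := by
      have e : n + 1 - P = n - P + 1 := by omega
      rw [Finset.sum_Ico_eq_sum_range, e]
    have step3 : ∑ j ∈ Finset.range (n - P + 1), cf α (n - (P + j))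
        = ∑ j ∈ Finset.range (n - P + 1), cf α j := by
      rw [← Finset.sum_range_reflect (fun j => cf α j) (n - P + 1)]
      apply Finset.sum_congr rfl
      intro j hj
      have hj' : j ≤ n - P := by have := Finset.mem_range.mp hj; omega
      congr 1
      omega
    calc ∑ i ∈ Finset.Ico P (n + 1), cf α (n - i) * ud α q i
        ≤ ∑ i ∈ Finset.Ico P (n + 1), cf α (n - i) * ud α q P := step1
      _ = (∑ i ∈ Finset.Ico P (n + 1), cf α (n - i)) * ud α q P := by rw [Finset.sum_mul]
      _ = cf (1 + α) (n - P) * ud α q P := by rw [step2, step3, sum_cf_alpha]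
      _ = ud α q P * cf (1 + α) (n - P) := by ring
  nlinarith [mul_le_mul_of_nonneg_left (add_le_add hpiece1 hpiece2) h0]

lemma ud_mul_le_Gamma {q : ℝ} (h0 : 0 ≤ q) (h1 : q < 1) (k : ℕ) :
    ud α q (k+1) * (q * ((k+1:ℕ):ℝ) ^ α) ≤ Real.Gamma (1 + α) := by
  have hub := ud_upper hα hα1 h0 h1 (k+1)
  have hE := ud_nonneg hα hα1 h0 h1 (k+1)
  have hcl := cf_lower (show (1:ℝ) ≤ 1 + α by linarith) k
  rw [show (1:ℝ) + α - 1 = α by ring] at hcl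
  -- hcl : (k+1)^α * Γ(1+α)⁻¹ ≤ cf (1+α) (k+1)
  have hΓ : 0 < Real.Gamma (1 + α) := Real.Gamma_pos_of_pos (by linarith)
  have hka : (0:ℝ) < ((k+1:ℕ):ℝ) ^ α := Real.rpow_pos_of_pos (by positivity) _
  have h2 : ud α q (k+1) * (q * (((k+1:ℕ):ℝ) ^ α * (Real.Gamma (1 + α))⁻¹)) ≤ 1 := by
    calc ud α q (k+1) * (q * (((k+1:ℕ):ℝ) ^ α * (Real.Gamma (1 + α))⁻¹))
        ≤ ud α q (k+1) * (q * cf (1 + α) (k+1)) := by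
          apply mul_le_mul_of_nonneg_left _ hE
          apply mul_le_mul_of_nonneg_left hcl h0
      _ ≤ 1 := by nlinarith
  have h3 := mul_le_mul_of_nonneg_right h2 hΓ.le
  rw [one_mul] at h3
  calc ud α q (k+1) * (q * ((k+1:ℕ):ℝ) ^ α)
      = ud α q (k+1) * (q * (((k+1:ℕ):ℝ) ^ α * (Real.Gamma (1+α))⁻¹)) * Real.Gamma (1+α) := by
        field_simp
    _ ≤ Real.Gamma (1 + α) := h3

lemma sum_rpow_le : ∀ K : ℕ, ∑ i ∈ Finset.range K, ((i+1:ℕ):ℝ) ^ (-α) ≤ (K:ℝ) ^ (1-α) / (1-α) := by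
  intro K
  induction K with
  | zero => simp [Real.zero_rpow (by linarith : (1:ℝ) - α ≠ 0)]
  | succ K ih =>
    rw [Finset.sum_range_succ]
    have key : (1-α) * ((K+1:ℕ):ℝ) ^ (-α) ≤ ((K+1:ℕ):ℝ) ^ (1-α) - (K:ℝ) ^ (1-α) := by
      have hK1 : (0:ℝ) < ((K+1:ℕ):ℝ) := by positivity
      have hb : ((K:ℕ):ℝ) = ((K+1:ℕ):ℝ) * (1 + (-(1/((K+1:ℕ):ℝ)))) := by
        push_cast
        field_simp
        ring
      have hbern : (1 + (-(1/((K+1:ℕ):ℝ)))) ^ (1-α) ≤ 1 + (1-α) * (-(1/((K+1:ℕ):ℝ))) := by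
        apply rpow_one_add_le_one_add_mul_self _ (by linarith) (by linarith)
        have : 1/((K+1:ℕ):ℝ) ≤ 1 := by
          rw [div_le_one hK1]
          push_cast
          linarith [Nat.cast_nonneg (α := ℝ) K]
        linarith
      have hKrw : (K:ℝ) ^ (1-α)
          = ((K+1:ℕ):ℝ) ^ (1-α) * (1 + (-(1/((K+1:ℕ):ℝ)))) ^ (1-α) := by
        rw [hb, Real.mul_rpow hK1.le]
        have : (0:ℝ) ≤ 1 + (-(1/((K+1:ℕ):ℝ))) := by
          have : 1/((K+1:ℕ):ℝ) ≤ 1 := by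
            rw [div_le_one hK1]
            push_cast
            linarith [Nat.cast_nonneg (α := ℝ) K]
          linarith
        exact this
      have hpa : (0:ℝ) < ((K+1:ℕ):ℝ) ^ (1-α) := Real.rpow_pos_of_pos hK1 _
      have hsub : ((K+1:ℕ):ℝ) ^ (1-α) * (1/((K+1:ℕ):ℝ)) = ((K+1:ℕ):ℝ) ^ (-α) := by
        rw [show (-α) = (1-α) + (-1) by ring, Real.rpow_add hK1, Real.rpow_neg_one]
        field_simp
      calc (1-α) * ((K+1:ℕ):ℝ) ^ (-α)
          = ((K+1:ℕ):ℝ) ^ (1-α) - ((K+1:ℕ):ℝ) ^ (1-α) * (1 + (1-α) * (-(1/((K+1:ℕ):ℝ)))) := by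
            rw [← hsub]; ring
        _ ≤ ((K+1:ℕ):ℝ) ^ (1-α) - ((K+1:ℕ):ℝ) ^ (1-α) * (1 + (-(1/((K+1:ℕ):ℝ)))) ^ (1-α) := by
            nlinarith
        _ = ((K+1:ℕ):ℝ) ^ (1-α) - (K:ℝ) ^ (1-α) := by rw [← hKrw]
    have h1α : (0:ℝ) < 1 - α := by linarith
    have key2 : ((K+1:ℕ):ℝ)^(-α) + (K:ℝ)^(1-α)/(1-α) ≤ ((K+1:ℕ):ℝ)^(1-α)/(1-α) := by
      rw [← sub_nonneg]
      have expand : ((K+1:ℕ):ℝ)^(1-α)/(1-α) - (((K+1:ℕ):ℝ)^(-α) + (K:ℝ)^(1-α)/(1-α))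
          = (((K+1:ℕ):ℝ)^(1-α) - (K:ℝ)^(1-α) - (1-α)*((K+1:ℕ):ℝ)^(-α))/(1-α) := by
        field_simp
        ring
      rw [expand]
      apply div_nonneg _ h1α.le
      linarith [key]
    linarith [ih, key2]

end LowerPrep

section Lower

variable {α : ℝ} (hα : 0 < α) (hα1 : α < 1)

include hα hα1

lemma Usum_le {q : ℝ} (hq0 : 0 < q) (h1 : q < 1) (P : ℕ) :
    ∑ i ∈ Finset.range P, ud α q i
      ≤ 1 + Real.Gamma (1+α) / q * ((P:ℝ) ^ ((1:ℝ)-α) / (1-α)) := by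
  have hΓ : 0 < Real.Gamma (1+α) := Real.Gamma_pos_of_pos (by linarith)
  have hΓq : 0 ≤ Real.Gamma (1+α) / q := by positivity
  cases P with
  | zero =>
    simp only [Finset.range_zero, Finset.sum_empty, Nat.cast_zero]
    have h00 : (0:ℝ) ^ ((1:ℝ)-α) = 0 := Real.zero_rpow (by linarith : (1:ℝ) - α ≠ 0)
    rw [h00]
    norm_num
  | succ P =>
    rw [Finset.sum_range_succ' (fun i => ud α q i)]
    have hbound : ∀ i : ℕ, ud α q (i+1) ≤ Real.Gamma (1+α) / q * ((i+1:ℕ):ℝ) ^ (-α) := by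
      intro i
      have h := ud_mul_le_Gamma hα hα1 hq0.le h1 i
      have hka : (0:ℝ) < ((i+1:ℕ):ℝ) ^ α := Real.rpow_pos_of_pos (by positivity) _
      have hneg : ((i+1:ℕ):ℝ) ^ (-α) = (((i+1:ℕ):ℝ) ^ α)⁻¹ :=
        Real.rpow_neg (by positivity) α
      rw [hneg]
      rw [show Real.Gamma (1+α) / q * (((i+1:ℕ):ℝ) ^ α)⁻¹
          = Real.Gamma (1+α) / (q * ((i+1:ℕ):ℝ) ^ α) by field_simp]
      rw [le_div_iff₀ (mul_pos hq0 hka)]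
      exact h
    have hsum1 : ∑ i ∈ Finset.range P, ud α q (i+1)
        ≤ Real.Gamma (1+α) / q * ∑ i ∈ Finset.range P, ((i+1:ℕ):ℝ) ^ (-α) := by
      rw [Finset.mul_sum]
      exact Finset.sum_le_sum (fun i _ => hbound i)
    have hsum2 : ∑ i ∈ Finset.range P, ((i+1:ℕ):ℝ) ^ (-α) ≤ (P:ℝ) ^ ((1:ℝ)-α) / (1-α) :=
      sum_rpow_le hα hα1 P
    have hmono : (P:ℝ) ^ ((1:ℝ)-α) ≤ ((P+1:ℕ):ℝ) ^ ((1:ℝ)-α) := by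
      apply Real.rpow_le_rpow (Nat.cast_nonneg P) _ (by linarith)
      push_cast
      linarith
    have hud0 : ud α q 0 ≤ 1 := ud_le_one hα hα1 hq0.le h1 0
    have h1α : (0:ℝ) < 1 - α := by linarith
    calc (∑ i ∈ Finset.range P, ud α q (i+1)) + ud α q 0
        ≤ Real.Gamma (1+α) / q * ((P:ℝ) ^ ((1:ℝ)-α) / (1-α)) + 1 := by
          have := le_trans hsum1 (mul_le_mul_of_nonneg_left hsum2 hΓq)
          linarith
      _ ≤ 1 + Real.Gamma (1+α) / q * (((P+1:ℕ):ℝ) ^ ((1:ℝ)-α) / (1-α)) := by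
          have h5 : (P:ℝ) ^ ((1:ℝ)-α) / (1-α) ≤ ((P+1:ℕ):ℝ) ^ ((1:ℝ)-α) / (1-α) := by
            have := mul_le_mul_of_nonneg_right hmono (le_of_lt (inv_pos.mpr h1α))
            simpa [div_eq_mul_inv] using this
          have h6 := mul_le_mul_of_nonneg_left h5 hΓq
          linarith

lemma lower_eventual {M : ℕ} (hM2 : 2 ≤ M) {x : ℝ} (hx : 4 ≤ x) {N : ℕ} (hN1 : 1 ≤ N)
    (hMc : α * (((M:ℝ)-1)) ^ (α-1) / (1-α) ≤ 1/4)
    (hq1 : x / ((M*N:ℕ):ℝ) ^ α < 1) :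
    (1/2 - (x / ((M*N:ℕ):ℝ) ^ α) * (Real.Gamma α)⁻¹) / (2*x)
      ≤ ud α (x / ((M*N:ℕ):ℝ) ^ α) N := by
  have hx0 : (0:ℝ) < x := by linarith
  set n : ℕ := M * N with hn
  have hn1 : 1 ≤ n := by
    have : 1 * 1 ≤ M * N := Nat.mul_le_mul (by omega) hN1
    omega
  have hNn : N < n := by
    have : 2 * N ≤ M * N := Nat.mul_le_mul_right N hM2
    omega
  have hnR : (0:ℝ) < (n:ℝ) := by exact_mod_cast hn1
  have hna : (0:ℝ) < (n:ℝ) ^ α := Real.rpow_pos_of_pos hnR α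
  set q : ℝ := x / (n:ℝ) ^ α with hq
  have hq0 : 0 < q := by rw [hq]; positivity
  have h1 : q < 1 := hq1
  have hqx : q * (n:ℝ) ^ α = x := div_mul_cancel₀ x (ne_of_gt hna)
  set K : ℕ := n - N with hK
  have hK1 : 1 ≤ K := by omega
  have hKn : K ≤ n := by omega
  have hKR : (1:ℝ) ≤ (K:ℝ) := by exact_mod_cast hK1
  have hΓα : 0 < Real.Gamma α := Real.Gamma_pos_of_pos hα
  have hΓ1α : 0 < Real.Gamma (1+α) := Real.Gamma_pos_of_pos (by linarith)
  have hsplit := discrete_split hα hα1 hq0.le h1 hN1 hNn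
  rw [← hK] at hsplit
  set U : ℝ := ∑ i ∈ Finset.range N, ud α q i with hU
  have hU0 : 0 ≤ U := Finset.sum_nonneg (fun i _ => ud_nonneg hα hα1 hq0.le h1 i)
  -- (A)
  have hA : ud α q n ≤ 1/4 := by
    have h := ud_mul_le_Gamma hα hα1 hq0.le h1 (n-1)
    have e : (n - 1) + 1 = n := by omega
    rw [e, hqx] at h
    have hΓle := Gamma_one_add_le_one hα hα1
    have hudn := ud_nonneg hα hα1 hq0.le h1 n
    nlinarith
  -- (B)
  have hcfK : cf α K ≤ (K:ℝ) ^ (α-1) * (Real.Gamma α)⁻¹ := by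
    have h := cf_upper_small hα hα1.le (K-1)
    have e : (K - 1) + 1 = K := by omega
    rw [e] at h
    exact h
  have hKα1 : (K:ℝ) ^ (α-1) ≤ 1 :=
    Real.rpow_le_one_of_one_le_of_nonpos hKR (by linarith)
  have hKcast : (K:ℝ) = ((M:ℝ) - 1) * (N:ℝ) := by
    rw [hK, hn]
    have : N ≤ M * N := le_of_lt hNn
    push_cast [Nat.cast_sub this]
    ring
  have hM1R : (1:ℝ) ≤ (M:ℝ) - 1 := by
    have : (2:ℝ) ≤ (M:ℝ) := by exact_mod_cast hM2
    linarith
  have hNR : (0:ℝ) < (N:ℝ) := by exact_mod_cast hN1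
  have hKN : (K:ℝ) ^ (α-1) * (N:ℝ) ^ ((1:ℝ)-α) = ((M:ℝ)-1) ^ (α-1) := by
    rw [hKcast, Real.mul_rpow (by linarith : (0:ℝ) ≤ (M:ℝ)-1) hNR.le]
    rw [mul_assoc, ← Real.rpow_add hNR]
    rw [show α - 1 + ((1:ℝ)-α) = 0 by ring, Real.rpow_zero, mul_one]
  have hB : q * (cf α K * U) ≤ q * (Real.Gamma α)⁻¹ + 1/4 := by
    have hUb := Usum_le hα hα1 hq0 h1 N
    rw [← hU] at hUb
    have hcf0 : 0 ≤ cf α K := cf_nonneg hα.le K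
    have hKpos : (0:ℝ) < (K:ℝ) ^ (α-1) := Real.rpow_pos_of_pos (by linarith) _
    have step1 : q * (cf α K * U)
        ≤ q * (((K:ℝ) ^ (α-1) * (Real.Gamma α)⁻¹)
            * (1 + Real.Gamma (1+α) / q * ((N:ℝ) ^ ((1:ℝ)-α) / (1-α)))) := by
      apply mul_le_mul_of_nonneg_left _ hq0.le
      apply mul_le_mul hcfK hUb hU0 (by positivity)
    have expand : q * (((K:ℝ) ^ (α-1) * (Real.Gamma α)⁻¹)
            * (1 + Real.Gamma (1+α) / q * ((N:ℝ) ^ ((1:ℝ)-α) / (1-α))))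
        = q * ((K:ℝ) ^ (α-1) * (Real.Gamma α)⁻¹)
          + ((K:ℝ) ^ (α-1) * (N:ℝ) ^ ((1:ℝ)-α)) * ((Real.Gamma α)⁻¹ * Real.Gamma (1+α)) / (1-α) := by
      have hq' : q ≠ 0 := ne_of_gt hq0
      have h1α' : (1:ℝ) - α ≠ 0 := by linarith
      field_simp
    have hΓratio : (Real.Gamma α)⁻¹ * Real.Gamma (1+α) = α := by
      rw [show (1:ℝ)+α = α+1 by ring, Real.Gamma_add_one (ne_of_gt hα)]
      field_simp
    rw [expand, hKN, hΓratio] at step1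
    have t1 : q * ((K:ℝ) ^ (α-1) * (Real.Gamma α)⁻¹) ≤ q * (Real.Gamma α)⁻¹ := by
      apply mul_le_mul_of_nonneg_left _ hq0.le
      have := mul_le_mul_of_nonneg_right hKα1 (le_of_lt (inv_pos.mpr hΓα))
      linarith
    have t2 : ((M:ℝ)-1) ^ (α-1) * α / (1-α) ≤ 1/4 := by
      have e : ((M:ℝ)-1) ^ (α-1) * α / (1-α) = α * ((M:ℝ)-1) ^ (α-1) / (1-α) := by ring
      rw [e]
      exact hMc
    linarith [step1, t1, t2]
  -- (C)
  have hC : q * (ud α q N * cf (1+α) K) ≤ 2*x * ud α q N := by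
    have hcfK2 : cf (1+α) K ≤ (1+α) * (K:ℝ) ^ α := by
      have h := cf_upper_big (show (1:ℝ) ≤ 1 + α by linarith) (K-1)
      have e : (K - 1) + 1 = K := by omega
      rw [e, show (1:ℝ) + α - 1 = α by ring] at h
      exact h
    have hKα : (0:ℝ) < (K:ℝ) ^ α := Real.rpow_pos_of_pos (by linarith) α
    have hqK : q * (K:ℝ) ^ α ≤ x := by
      have hle : (K:ℝ) ^ α ≤ (n:ℝ) ^ α :=
        Real.rpow_le_rpow (by linarith) (by exact_mod_cast hKn) hα.le
      calc q * (K:ℝ) ^ α ≤ q * (n:ℝ) ^ α := mul_le_mul_of_nonneg_left hle hq0.le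
        _ = x := hqx
    have hudN := ud_nonneg hα hα1 hq0.le h1 N
    calc q * (ud α q N * cf (1+α) K)
        ≤ q * (ud α q N * ((1+α) * (K:ℝ) ^ α)) := by
          apply mul_le_mul_of_nonneg_left _ hq0.le
          exact mul_le_mul_of_nonneg_left hcfK2 hudN
      _ = (1+α) * (q * (K:ℝ) ^ α) * ud α q N := by ring
      _ ≤ (1+α) * x * ud α q N := by
          apply mul_le_mul_of_nonneg_right _ hudN
          apply mul_le_mul_of_nonneg_left hqK (by linarith : (0:ℝ) ≤ 1 + α)
      _ ≤ 2 * x * ud α q N := by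
          apply mul_le_mul_of_nonneg_right _ hudN
          apply mul_le_mul_of_nonneg_right (by linarith : (1:ℝ) + α ≤ 2) hx0.le
  -- combine
  rw [div_le_iff₀ (by positivity : (0:ℝ) < 2*x)]
  have hfinal : 1 ≤ 1/4 + (q * (Real.Gamma α)⁻¹ + 1/4) + 2*x * ud α q N := by
    calc (1:ℝ) ≤ ud α q n + q * (cf α K * U) + q * (ud α q N * cf (1+α) K) := hsplit
      _ ≤ 1/4 + (q * (Real.Gamma α)⁻¹ + 1/4) + 2*x * ud α q N := by
        apply add_le_add (add_le_add hA hB) hC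
  linarith

end Lower

section Final

variable {α : ℝ} (hα : 0 < α) (hα1 : α < 1)

include hα hα1

lemma EML_lower_main {M : ℕ} (hM2 : 2 ≤ M)
    (hMc : α * (((M:ℝ)-1)) ^ (α-1) / (1-α) ≤ 1/4) {x : ℝ} (hx : 4 ≤ x) :
    1/(4*x) ≤ EML α (x / (M:ℝ) ^ α) := by
  have hx0 : (0:ℝ) < x := by linarith
  have hM0 : (0:ℝ) < (M:ℝ) := by
    have : (2:ℝ) ≤ (M:ℝ) := by exact_mod_cast hM2
    linarith
  have hMα : (0:ℝ) < (M:ℝ) ^ α := Real.rpow_pos_of_pos hM0 α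
  set y : ℝ := x / (M:ℝ) ^ α with hy
  have hy0 : 0 ≤ y := by positivity
  have t1 := ud_tendsto hα hα1 hy0
  have heq : ∀ N : ℕ, y / (N:ℝ) ^ α = x / ((M*N:ℕ):ℝ) ^ α := by
    intro N
    rw [hy]
    push_cast
    rw [Real.mul_rpow hM0.le (Nat.cast_nonneg N), div_div]
  have hq_t : Filter.Tendsto (fun N : ℕ => x / ((M*N:ℕ):ℝ) ^ α) Filter.atTop (nhds 0) := by
    apply Filter.Tendsto.div_atTop tendsto_const_nhds
    apply (tendsto_rpow_atTop hα).comp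
    apply tendsto_natCast_atTop_atTop.comp
    apply Filter.tendsto_atTop_mono (fun N => Nat.le_mul_of_pos_left N (by omega : 0 < M))
    exact Filter.tendsto_id
  have t2 : Filter.Tendsto
      (fun N : ℕ => (1/2 - (x / ((M*N:ℕ):ℝ) ^ α) * (Real.Gamma α)⁻¹) / (2*x))
      Filter.atTop (nhds ((1/2 - 0 * (Real.Gamma α)⁻¹) / (2*x))) :=
    ((tendsto_const_nhds.sub (hq_t.mul_const _)).div_const _)
  have hev : ∀ᶠ N : ℕ in Filter.atTop,
      (1/2 - (x / ((M*N:ℕ):ℝ) ^ α) * (Real.Gamma α)⁻¹) / (2*x)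
        ≤ ud α (y / (N:ℝ) ^ α) N := by
    filter_upwards [Filter.eventually_ge_atTop 1,
      hq_t.eventually_lt_const (by norm_num : (0:ℝ) < 1)] with N hN1 hq1
    rw [heq N]
    exact lower_eventual hα hα1 hM2 hx hN1 hMc hq1
  have hle := le_of_tendsto_of_tendsto t2 t1 hev
  have e : (1/2 - 0 * (Real.Gamma α)⁻¹) / (2*x) = 1/(4*x) := by
    field_simp
    ring
  rwa [e] at hle

lemma EML_small {y : ℝ} (hy0 : 0 ≤ y) : 1 - 2*y ≤ EML α y := by
  apply ge_of_tendsto (ud_tendsto hα hα1 hy0)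
  filter_upwards [eventually_q hα hα1 hy0] with k ⟨h0, h1, hk1⟩
  set q : ℝ := y / (k:ℝ) ^ α with hq
  have hk0 : (0:ℝ) < (k:ℝ) := by exact_mod_cast hk1
  have hka : (0:ℝ) < (k:ℝ) ^ α := Real.rpow_pos_of_pos hk0 α
  have hqk : q * (k:ℝ) ^ α = y := div_mul_cancel₀ y (ne_of_gt hka)
  have hrec := rec2 hα hα1 h0 h1 k
  have hS : ∑ l ∈ Finset.range (k+1), cf α l * ud α q (k - l) ≤ cf (1+α) k := by
    calc ∑ l ∈ Finset.range (k+1), cf α l * ud α q (k - l)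
        ≤ ∑ l ∈ Finset.range (k+1), cf α l * 1 := by
          apply Finset.sum_le_sum
          intro l _
          exact mul_le_mul_of_nonneg_left (ud_le_one hα hα1 h0 h1 _) (cf_nonneg hα.le l)
      _ = cf (1+α) k := by
          simp only [mul_one]
          exact sum_cf_alpha k
  have hcfb : cf (1+α) k ≤ (1+α) * (k:ℝ) ^ α := by
    have h := cf_upper_big (show (1:ℝ) ≤ 1 + α by linarith) (k-1)
    have e : (k - 1) + 1 = k := by omega
    rw [e, show (1:ℝ) + α - 1 = α by ring] at h
    exact h
  have hqcf : q * cf (1+α) k ≤ 2 * y := by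
    calc q * cf (1+α) k ≤ q * ((1+α) * (k:ℝ) ^ α) := by
          apply mul_le_mul_of_nonneg_left hcfb h0
      _ = (1+α) * (q * (k:ℝ) ^ α) := by ring
      _ = (1+α) * y := by rw [hqk]
      _ ≤ 2 * y := by nlinarith
  have hS0 : 0 ≤ ∑ l ∈ Finset.range (k+1), cf α l * ud α q (k - l) :=
    Finset.sum_nonneg (fun l _ =>
      mul_nonneg (cf_nonneg hα.le l) (ud_nonneg hα hα1 h0 h1 _))
  nlinarith [mul_le_mul_of_nonneg_left hS h0]

lemma exists_M : ∃ M : ℕ, 2 ≤ M ∧ α * (((M:ℝ)-1)) ^ (α-1) / (1-α) ≤ 1/4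
    ∧ (16:ℝ) ≤ (M:ℝ) ^ α := by
  have h1α : (0:ℝ) < 1 - α := by linarith
  have hc : (0:ℝ) < (1-α)/(4*α) := by positivity
  have tA : Filter.Tendsto (fun M : ℕ => ((M:ℝ)-1) ^ (α-1)) Filter.atTop (nhds 0) := by
    have base : Filter.Tendsto (fun z : ℝ => z ^ (-(1-α))) Filter.atTop (nhds 0) :=
      tendsto_rpow_neg_atTop h1α
    have comp : Filter.Tendsto (fun M : ℕ => (M:ℝ) - 1) Filter.atTop Filter.atTop :=
      Filter.tendsto_atTop_add_const_right _ _ tendsto_natCast_atTop_atTop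
    have := base.comp comp
    apply this.congr
    intro M
    simp only [Function.comp_apply]
    congr 1
    ring
  have tB : Filter.Tendsto (fun M : ℕ => (M:ℝ) ^ α) Filter.atTop Filter.atTop :=
    (tendsto_rpow_atTop hα).comp tendsto_natCast_atTop_atTop
  have ev := ((tA.eventually_lt_const hc).and (tB.eventually_ge_atTop 16)).and
    (Filter.eventually_ge_atTop 2)
  obtain ⟨M, ⟨hA, hB⟩, hM2⟩ := ev.exists
  refine ⟨M, hM2, ?_, hB⟩
  have h1 : ((M:ℝ)-1) ^ (α-1) ≤ (1-α)/(4*α) := le_of_lt hA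
  have h2 : α * (((M:ℝ)-1)) ^ (α-1) ≤ α * ((1-α)/(4*α)) :=
    mul_le_mul_of_nonneg_left h1 hα.le
  have h3 : α * ((1-α)/(4*α)) / (1-α) = 1/4 := by
    field_simp
  calc α * (((M:ℝ)-1)) ^ (α-1) / (1-α) ≤ α * ((1-α)/(4*α)) / (1-α) := by
        have hinv : (0:ℝ) ≤ (1-α)⁻¹ := le_of_lt (inv_pos.mpr h1α)
        rw [div_eq_mul_inv, div_eq_mul_inv]
        exact mul_le_mul_of_nonneg_right h2 hinv
    _ = 1/4 := h3

end Final
end ML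

open MeasureTheory Real Set

/-- The two-parameter Mittag-Leffler function `E_{a,b}(z) = ∑ₖ zᵏ / Γ(a k + b)`. -/
noncomputable def mittagLeffler (a b z : ℝ) : ℝ :=
  ∑' k : ℕ, z ^ k / Real.Gamma (a * k + b)

theorem mittagLeffler_alpha_one_asymp (α : ℝ) (hα : 0 < α) (hα1 : α < 1) :
    ∃ c₁ > (0:ℝ), ∃ c₂ > (0:ℝ), ∀ x : ℝ, 0 ≤ x →
      c₁ / (1 + x) ≤ mittagLeffler α 1 (-x) ∧
      mittagLeffler α 1 (-x) ≤ c₂ / (1 + x) := by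
  obtain ⟨M, hM2, hMc, hM16⟩ := ML.exists_M hα hα1
  have hM0 : (0:ℝ) < (M:ℝ) := by
    have : (2:ℝ) ≤ (M:ℝ) := by exact_mod_cast hM2
    linarith
  have hMα : (0:ℝ) < (M:ℝ) ^ α := Real.rpow_pos_of_pos hM0 α
  have hΓ : 0 < Real.Gamma (1+α) := Real.Gamma_pos_of_pos (by linarith)
  refine ⟨min (1/2) (1/(4*(M:ℝ)^α)), by positivity, (Real.Gamma (1+α))⁻¹, by positivity, ?_⟩
  intro x hx
  have h1x : (0:ℝ) < 1 + x := by linarith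
  have hEq : mittagLeffler α 1 (-x) = ML.EML α x := rfl
  constructor
  · rw [hEq]
    rcases le_or_gt x (1/4) with hc | hc
    · -- small x
      have hlow := ML.EML_small hα hα1 hx
      have h2 : min (1/2) (1/(4*(M:ℝ)^α)) / (1 + x) ≤ min (1/2) (1/(4*(M:ℝ)^α)) := by
        apply div_le_self (by positivity) (by linarith)
      calc min (1/2) (1/(4*(M:ℝ)^α)) / (1 + x) ≤ min (1/2) (1/(4*(M:ℝ)^α)) := h2
        _ ≤ 1/2 := min_le_left _ _
        _ ≤ 1 - 2*x := by linarith
        _ ≤ ML.EML α x := hlow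
    · -- large x
      set X : ℝ := x * (M:ℝ)^α with hX
      have hX4 : 4 ≤ X := by
        rw [hX]
        calc (4:ℝ) = (1/4) * 16 := by norm_num
          _ ≤ x * (M:ℝ)^α := by
            apply mul_le_mul (le_of_lt hc) hM16 (by norm_num) (by linarith)
      have hmain := ML.EML_lower_main hα hα1 hM2 hMc hX4
      have hXx : X / (M:ℝ)^α = x := by
        rw [hX]
        field_simp
      rw [hXx] at hmain
      -- hmain : 1/(4*X) ≤ EML α x
      have hx0 : (0:ℝ) < x := by linarith
      have hfin : min (1/2) (1/(4*(M:ℝ)^α)) / (1 + x) ≤ 1/(4*X) := by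
        have s1 : min (1/2) (1/(4*(M:ℝ)^α)) / (1 + x) ≤ (1/(4*(M:ℝ)^α)) / (1 + x) :=
          div_le_div_of_nonneg_right (min_le_right _ _) h1x.le
        have s2 : (1/(4*(M:ℝ)^α)) / (1 + x) ≤ (1/(4*(M:ℝ)^α)) / x :=
          div_le_div_of_nonneg_left (by positivity) hx0 (by linarith)
        have s3 : (1/(4*(M:ℝ)^α)) / x = 1/(4*X) := by
          rw [hX]
          field_simp
        linarith
      linarith
  · rw [hEq]
    have h := ML.EML_upper' hα hα1 hx
    rw [le_div_iff₀ h1x]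
    linarith
end

section
/- Let 0 < α < 1 and λ ≥ 0. For every t > 0, the function G(t) = (1/Γ(α)) ∫_0^t (t-s)^{α-1} E_{α,1}(-λ s^α) ds is differentiable at t, and its derivative equals t^{α-1} E_{α,α}(-λ t^α). (This is the Fourier-space form of the identity Y = ∂_t^{1-α} Z between the two fundamental solutions, where ∂_t^{1-α} f = d/dt (g_α ∗ f) is the Riemann–Liouville derivative of order 1-α.) -/
open MeasureTheory Real Set

lemma gamma_lower {x : ℝ} (hx : 2 ≤ x) : (Nat.factorial (⌊x⌋₊ - 1) : ℝ) ≤ Real.Gamma x := by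
  have h0 : (0:ℝ) ≤ x := by linarith
  have h2n : 2 ≤ ⌊x⌋₊ := Nat.le_floor (by exact_mod_cast hx)
  have h2 : (2:ℝ) ≤ (⌊x⌋₊ : ℝ) := by exact_mod_cast h2n
  have hle : (⌊x⌋₊ : ℝ) ≤ x := Nat.floor_le h0
  have hmono := Real.Gamma_strictMonoOn_Ici.monotoneOn (a := (⌊x⌋₊ : ℝ)) (b := x)
    (by simpa using h2) (by simpa using hx) hle
  have hfac : Real.Gamma (⌊x⌋₊ : ℝ) = (Nat.factorial (⌊x⌋₊ - 1) : ℝ) := by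
    have h1 : (⌊x⌋₊ : ℝ) = ((⌊x⌋₊ - 1 : ℕ) : ℝ) + 1 := by
      have : ⌊x⌋₊ - 1 + 1 = ⌊x⌋₊ := Nat.succ_pred_eq_of_pos (Nat.lt_of_lt_of_le Nat.zero_lt_two h2n)
      exact_mod_cast (congrArg (Nat.cast (R := ℝ)) this).symm
    rw [h1, Real.Gamma_nat_eq_factorial]
  linarith [hmono, hfac.le]

lemma ml_summable_aux (a b q : ℝ) (ha : 0 < a) (hb : 0 < b) (hq : 0 ≤ q) :
    Summable (fun k : ℕ => ((k:ℝ)+1) * q^k / Real.Gamma (a*k+b)) := by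
  set R : ℝ := (4*q+4) ^ (2/a) with hRdef
  have hq4 : (1:ℝ) < 4*q+4 := by linarith
  have hR1 : 1 < R := by
    rw [hRdef]
    exact Real.one_lt_rpow_iff_of_pos (by linarith) |>.mpr (Or.inl ⟨hq4, by positivity⟩)
  have hR0 : 0 < R := by linarith
  have hRhalf : R ^ (a/2) = 4*q+4 := by
    rw [hRdef, ← Real.rpow_mul (by linarith)]
    rw [show 2/a*(a/2) = 1 by field_simp]
    exact Real.rpow_one _
  -- comparison series
  have hsum : Summable (fun k : ℕ => Real.exp R * (((k:ℝ)+1) * (1/4)^k)) := by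
    apply Summable.mul_left
    have h1 : Summable (fun k : ℕ => (k:ℝ) * (1/4)^k) := by
      simpa using summable_pow_mul_geometric_of_norm_lt_one (R := ℝ) 1 (r := 1/4) (by norm_num)
    have h2 : Summable (fun k : ℕ => ((1:ℝ)/4)^k) := summable_geometric_of_lt_one (by norm_num) (by norm_num)
    simpa [add_mul, one_mul] using h1.add h2
  apply Summable.of_norm_bounded_eventually_nat hsum
  filter_upwards [Filter.eventually_ge_atTop ⌈4/a⌉₊] with k hk
  have hk4 : 4/a ≤ (k:ℝ) := (Nat.ceil_le.mp hk)
  have hak : 4 ≤ a * k := by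
    rw [div_le_iff₀ ha] at hk4; linarith [hk4]
  have hx2 : 2 ≤ a*k+b := by linarith
  have hΓpos : 0 < Real.Gamma (a*k+b) := Real.Gamma_pos_of_pos (by linarith)
  have hterm_nonneg : 0 ≤ ((k:ℝ)+1) * q^k / Real.Gamma (a*k+b) := by positivity
  rw [Real.norm_of_nonneg hterm_nonneg]
  -- lower bound for Gamma
  set m : ℕ := ⌊a*k+b⌋₊ - 1 with hm
  have hmge : (a/2) * k ≤ (m:ℝ) := by
    have hfl : a*k+b - 1 ≤ ((⌊a*k+b⌋₊ : ℕ) : ℝ) := by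
      have := Nat.sub_one_lt_floor (a*k+b)
      linarith [this.le]
    have h2n : 2 ≤ ⌊a*k+b⌋₊ := Nat.le_floor (by exact_mod_cast hx2)
    have : (m:ℝ) = (⌊a*k+b⌋₊ : ℝ) - 1 := by
      rw [hm]; push_cast [Nat.cast_sub (by omega : 1 ≤ ⌊a*k+b⌋₊)]; ring
    rw [this]
    have : a*k+b-2 ≤ (⌊a*k+b⌋₊:ℝ) - 1 := by linarith
    nlinarith [hak, hb, ha.le]
  have hfac_ge : R ^ ((a/2) * k) / Real.exp R ≤ (Nat.factorial m : ℝ) := by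
    have h1 : R ^ (m:ℕ) / (Nat.factorial m : ℝ) ≤ Real.exp R :=
      Real.pow_div_factorial_le_exp (x := R) hR0.le m
    have hfpos : (0:ℝ) < (Nat.factorial m : ℝ) := by exact_mod_cast Nat.factorial_pos m
    have h2 : R ^ (m:ℕ) ≤ Real.exp R * (Nat.factorial m : ℝ) := by
      rw [div_le_iff₀ hfpos] at h1; linarith
    have h3 : R ^ ((a/2)*k) ≤ R ^ (m:ℕ) := by
      rw [← Real.rpow_natCast R m]
      exact Real.rpow_le_rpow_left_iff hR1 |>.mpr hmge
    rw [div_le_iff₀ (Real.exp_pos R)]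
    calc R ^ ((a/2)*k) ≤ Real.exp R * (Nat.factorial m : ℝ) := le_trans h3 h2
    _ = (Nat.factorial m:ℝ) * Real.exp R := by ring
  have hΓge : R ^ ((a/2) * k) / Real.exp R ≤ Real.Gamma (a*k+b) :=
    le_trans hfac_ge (gamma_lower hx2)
  have hRk : R ^ ((a/2) * k) = (4*q+4)^k := by
    rw [show (a/2)*(k:ℝ) = (a/2) * (k:ℕ) by norm_num, Real.rpow_mul hR0.le, hRhalf,
      Real.rpow_natCast]
  rw [hRk] at hΓge
  have h4pos : (0:ℝ) < (4*q+4)^k := by positivity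
  have hlb : 0 < (4*q+4)^k / Real.exp R := by positivity
  have hinv : 1 / Real.Gamma (a*k+b) ≤ Real.exp R / (4*q+4)^k := by
    rw [div_le_div_iff₀ hΓpos h4pos, one_mul]
    exact ((div_le_iff₀ (Real.exp_pos R)).mp hΓge).trans_eq (mul_comm _ _)
  calc ((k:ℝ)+1) * q^k / Real.Gamma (a*k+b)
      = (((k:ℝ)+1) * q^k) * (1 / Real.Gamma (a*k+b)) := by ring
    _ ≤ (((k:ℝ)+1) * q^k) * (Real.exp R / (4*q+4)^k) := by
        apply mul_le_mul_of_nonneg_left hinv (by positivity)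
    _ = Real.exp R * (((k:ℝ)+1) * (q/(4*q+4))^k) := by
        rw [div_pow]; ring
    _ ≤ Real.exp R * (((k:ℝ)+1) * (1/4)^k) := by
        apply mul_le_mul_of_nonneg_left _ (Real.exp_pos R).le
        apply mul_le_mul_of_nonneg_left _ (by positivity)
        apply pow_le_pow_left₀ (by positivity)
        rw [div_le_div_iff₀ (by linarith) (by norm_num)]; linarith

lemma ml_summable (a b q : ℝ) (ha : 0 < a) (hb : 0 < b) (hq : 0 ≤ q) :
    Summable (fun k : ℕ => q^k / Real.Gamma (a*k+b)) := by
  refine Summable.of_nonneg_of_le (fun k => ?_) (fun k => ?_) (ml_summable_aux a b q ha hb hq)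
  · have hΓ : 0 < Real.Gamma (a*k+b) := Real.Gamma_pos_of_pos (by positivity)
    positivity
  · have hΓ : 0 < Real.Gamma (a*k+b) := Real.Gamma_pos_of_pos (by positivity)
    gcongr
    nlinarith [pow_nonneg hq k, Nat.cast_nonneg (α := ℝ) k]

lemma beta_integrable {u v τ : ℝ} (hu : 0 < u) (hv : 0 < v) (hτ : 0 < τ) :
    IntervalIntegrable (fun s => s ^ (v-1) * (τ - s) ^ (u-1)) volume 0 τ := by
  have h1 : IntervalIntegrable (fun s => s ^ (v-1) * (τ - s) ^ (u-1)) volume 0 (τ/2) := by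
    apply IntervalIntegrable.mul_continuousOn (intervalIntegral.intervalIntegrable_rpow' (by linarith))
    apply ContinuousOn.rpow_const (continuous_const.sub continuous_id).continuousOn
    intro x hx
    rw [uIcc_of_le (by linarith)] at hx
    left
    intro h
    have hx2 : x = τ := by
      have : τ - x = 0 := h
      linarith
    linarith [hx.2]
  have h2 : IntervalIntegrable (fun s => s ^ (v-1) * (τ - s) ^ (u-1)) volume (τ/2) τ := by
    apply IntervalIntegrable.continuousOn_mul
    · have h0 : IntervalIntegrable (fun s : ℝ => s ^ (u-1)) volume (τ - τ/2) (τ - τ) := by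
        apply intervalIntegral.intervalIntegrable_rpow' (by linarith)
      simpa using h0.comp_sub_left τ
    · apply ContinuousOn.rpow_const continuousOn_id
      intro x hx
      rw [uIcc_of_le (by linarith)] at hx
      left
      have := hx.1
      intro h
      rw [show (id x : ℝ) = x from rfl] at h
      linarith [hx.1]
  exact h1.trans h2

lemma beta_eval {u v τ : ℝ} (hu : 0 < u) (hv : 0 < v) (hτ : 0 < τ) :
    ∫ s in (0:ℝ)..τ, s ^ (v-1) * (τ - s) ^ (u-1)
      = Real.Gamma u * Real.Gamma v / Real.Gamma (u+v) * τ ^ (u+v-1) := by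
  have hC : ∫ x in (0:ℝ)..τ, (x : ℂ) ^ ((v:ℂ) - 1) * ((τ : ℂ) - x) ^ ((u:ℂ) - 1) =
      (τ : ℂ) ^ ((v:ℂ) + u - 1) * Complex.betaIntegral v u :=
    Complex.betaIntegral_scaled v u hτ
  have hB : Complex.Gamma v * Complex.Gamma u
      = Complex.Gamma (v + u) * Complex.betaIntegral v u :=
    Complex.Gamma_mul_Gamma_eq_betaIntegral (by simpa using hv) (by simpa using hu)
  have hΓuv : Complex.Gamma ((v:ℂ) + u) ≠ 0 := by
    rw [show ((v:ℂ) + u) = ((v + u : ℝ) : ℂ) by push_cast; ring, Complex.Gamma_ofReal]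
    exact_mod_cast (Real.Gamma_pos_of_pos (by linarith)).ne'
  have hΓuv' : ((Real.Gamma (u+v) : ℝ) : ℂ) ≠ 0 := by
    exact_mod_cast (Real.Gamma_pos_of_pos (by linarith : (0:ℝ) < u+v)).ne'
  have hBeta : Complex.betaIntegral v u
      = (Real.Gamma u * Real.Gamma v / Real.Gamma (u+v) : ℝ) := by
    rw [show ((v:ℂ) + u) = ((u + v : ℝ) : ℂ) by push_cast; ring] at hB
    simp only [Complex.Gamma_ofReal] at hB
    rw [Complex.ofReal_div, eq_div_iff hΓuv', Complex.ofReal_mul]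
    linear_combination -hB
  have hcast : ∫ x in (0:ℝ)..τ, (x : ℂ) ^ ((v:ℂ) - 1) * ((τ : ℂ) - x) ^ ((u:ℂ) - 1)
      = ((∫ s in (0:ℝ)..τ, s ^ (v-1) * (τ - s) ^ (u-1) : ℝ) : ℂ) := by
    rw [← intervalIntegral.integral_ofReal]
    apply intervalIntegral.integral_congr
    intro x hx
    rw [uIcc_of_le hτ.le] at hx
    have hx0 : 0 ≤ x := hx.1
    have hτx : 0 ≤ τ - x := by linarith [hx.2]
    show (x:ℂ) ^ ((v:ℂ) - 1) * ((τ:ℂ) - x) ^ ((u:ℂ) - 1) = ((x ^ (v-1) * (τ - x) ^ (u-1) : ℝ) : ℂ)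
    rw [Complex.ofReal_mul, Complex.ofReal_cpow hx0, Complex.ofReal_cpow hτx]
    push_cast
    ring
  have hτpow : ((τ:ℂ)) ^ ((v:ℂ) + u - 1) = ((τ ^ (u+v-1) : ℝ) : ℂ) := by
    rw [show ((v:ℂ) + u - 1) = ((u + v - 1 : ℝ) : ℂ) by push_cast; ring]
    rw [Complex.ofReal_cpow hτ.le]
  rw [hcast, hτpow, hBeta, ← Complex.ofReal_mul] at hC
  rw [Complex.ofReal_inj.mp hC]
  ring

lemma G_eq (α lam : ℝ) (hα : 0 < α) (hα1 : α < 1) (hlam : 0 ≤ lam) (τ : ℝ) (hτ : 0 < τ) :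
    (1 / Real.Gamma α) * ∫ s in (0:ℝ)..τ, (τ - s) ^ (α - 1) * mittagLeffler α 1 (-(lam * s ^ α))
      = ∑' k : ℕ, (-lam)^k * τ ^ (α*k+α) / Real.Gamma (α*k+α+1) := by
  have hΓα : 0 < Real.Gamma α := Real.Gamma_pos_of_pos hα
  set F : ℕ → ℝ → ℝ := fun k s => ((-lam)^k / Real.Gamma (α*k+1)) * (s ^ (α*(k:ℕ)) * (τ - s)^(α-1)) with hF
  -- pointwise identity on Ioc
  have hpt : ∀ s ∈ Ioc (0:ℝ) τ,
      (τ - s) ^ (α - 1) * mittagLeffler α 1 (-(lam * s ^ α)) = ∑' k : ℕ, F k s := by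
    intro s hs
    have hs0 : 0 < s := hs.1
    have hML : mittagLeffler α 1 (-(lam * s ^ α))
        = ∑' k : ℕ, ((-lam)^k * s ^ (α*(k:ℕ))) / Real.Gamma (α*k+1) := by
      apply tsum_congr; intro k
      congr 1
      rw [show -(lam * s ^ α) = (-lam) * s ^ α by ring, mul_pow,
        ← Real.rpow_natCast (s ^ α) k, ← Real.rpow_mul hs0.le]
    rw [hML, ← tsum_mul_left]
    apply tsum_congr; intro k
    rw [hF]; ring
  -- each F k is integrable on Ioc 0 τ
  have hint : ∀ k : ℕ, IntegrableOn (F k) (Ioc 0 τ) volume := by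
    intro k
    have hb : IntervalIntegrable (fun s => s ^ ((α*k+1)-1) * (τ - s) ^ (α-1)) volume 0 τ :=
      beta_integrable hα (by positivity) hτ
    have := (hb.const_mul ((-lam)^k / Real.Gamma (α*k+1)))
    rw [intervalIntegrable_iff_integrableOn_Ioc_of_le hτ.le] at this
    simpa [hF] using this
  -- value of each integral
  have hval : ∀ k : ℕ, ∫ s in Ioc (0:ℝ) τ, F k s
      = ((-lam)^k / Real.Gamma (α*k+1)) *
        (Real.Gamma α * Real.Gamma (α*k+1) / Real.Gamma (α + (α*k+1)) * τ ^ (α + (α*k+1) - 1)) := by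
    intro k
    rw [hF]
    simp only []
    rw [MeasureTheory.integral_const_mul]
    congr 1
    have := beta_eval (u := α) (v := α*k+1) hα (by positivity) hτ
    rw [← intervalIntegral.integral_of_le hτ.le]
    rw [← this]
    apply intervalIntegral.integral_congr
    intro x _
    norm_num
  -- norm integrals summable
  have hnorm : Summable (fun k : ℕ => ∫ s in Ioc (0:ℝ) τ, ‖F k s‖) := by
    have hval2 : ∀ k : ℕ, ∫ s in Ioc (0:ℝ) τ, ‖F k s‖
        = (lam^k / Real.Gamma (α*k+1)) *
          (Real.Gamma α * Real.Gamma (α*k+1) / Real.Gamma (α + (α*k+1)) * τ ^ (α + (α*k+1) - 1)) := by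
      intro k
      have h1 : ∫ s in Ioc (0:ℝ) τ, ‖F k s‖
          = ∫ s in Ioc (0:ℝ) τ, (lam^k / Real.Gamma (α*k+1)) * (s ^ (α*(k:ℕ)) * (τ - s)^(α-1)) := by
        apply setIntegral_congr_fun measurableSet_Ioc
        intro s hs
        have hs0 : 0 < s := hs.1
        have hsτ : 0 ≤ τ - s := by linarith [hs.2]
        have hΓ : 0 < Real.Gamma (α*k+1) := Real.Gamma_pos_of_pos (by positivity)
        rw [hF]
        simp only []
        rw [norm_mul, norm_div, norm_pow, norm_neg, Real.norm_of_nonneg hlam,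
          Real.norm_of_nonneg hΓ.le, Real.norm_of_nonneg (by positivity)]
      rw [h1]
      have hb := hval  -- reuse structure: same computation with lam^k
      -- compute directly via beta_eval
      rw [MeasureTheory.integral_const_mul]
      congr 1
      have := beta_eval (u := α) (v := α*k+1) hα (by positivity) hτ
      rw [← intervalIntegral.integral_of_le hτ.le, ← this]
      apply intervalIntegral.integral_congr
      intro x _
      norm_num
    apply Summable.congr _ (fun k => (hval2 k).symm)
    -- summable of the explicit values
    have hq : 0 ≤ lam * τ ^ α := by positivity
    have hsum := ml_summable α (α+1) (lam * τ ^ α) hα (by linarith) hq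
    apply Summable.congr (hsum.mul_left (Real.Gamma α * τ ^ α))
    intro k
    have hΓ : 0 < Real.Gamma (α*k+1) := Real.Gamma_pos_of_pos (by positivity)
    have e1 : α + (α*k+1) - 1 = α*k + α := by ring
    have e2 : α + (α*k+1) = α*k + (α+1) := by ring
    have e3 : τ ^ (α*(k:ℕ) + α) = (τ ^ α)^k * τ ^ α := by
      rw [Real.rpow_add hτ, Real.rpow_mul hτ.le, Real.rpow_natCast]
    rw [e1, e2, e3]
    have e4 : (lam * τ ^ α)^k = lam^k * (τ^α)^k := mul_pow _ _ _
    field_simp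
    ring
  -- swap
  have hswap := MeasureTheory.integral_tsum_of_summable_integral_norm hint hnorm
  rw [intervalIntegral.integral_of_le hτ.le]
  rw [show ∫ s in Ioc (0:ℝ) τ, (τ - s) ^ (α - 1) * mittagLeffler α 1 (-(lam * s ^ α))
      = ∫ s in Ioc (0:ℝ) τ, ∑' k : ℕ, F k s from
    setIntegral_congr_fun measurableSet_Ioc hpt]
  rw [← hswap, ← tsum_mul_left]
  apply tsum_congr; intro k
  rw [hval k]
  have hΓ1 : 0 < Real.Gamma (α*k+1) := Real.Gamma_pos_of_pos (by positivity)
  have hΓ2 : 0 < Real.Gamma (α*k+α+1) := Real.Gamma_pos_of_pos (by positivity)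
  have e2 : α + (α*k+1) = α*k+α+1 := by ring
  have e1 : α + (α*k+1) - 1 = α*k + α := by ring
  rw [e1, e2]
  field_simp

lemma main_deriv (α lam : ℝ) (hα : 0 < α) (hα1 : α < 1) (hlam : 0 ≤ lam) (t : ℝ) (ht : 0 < t) :
    HasDerivAt (fun τ : ℝ => ∑' k : ℕ, (-lam)^k * τ ^ (α*k+α) / Real.Gamma (α*k+α+1))
      (t ^ (α - 1) * mittagLeffler α α (-(lam * t ^ α))) t := by
  set S : Set ℝ := Ioo (t/2) (2*t) with hS
  have hopen : IsOpen S := isOpen_Ioo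
  have hpre : IsPreconnected S := isPreconnected_Ioo
  have htS : t ∈ S := ⟨by linarith, by linarith⟩
  set g' : ℕ → ℝ → ℝ := fun k y => (-lam)^k * ((α*k+α) * y ^ (α*k+α-1)) / Real.Gamma (α*k+α+1)
    with hg'def
  set u : ℕ → ℝ := fun k => ((t/2) ^ (α-1) * α) * (((k:ℝ)+1) * (lam * (2*t)^α)^k /
    Real.Gamma (α*k+(α+1))) with hudef
  have hu : Summable u := by
    apply Summable.mul_left
    exact ml_summable_aux α (α+1) (lam * (2*t)^α) hα (by linarith) (by positivity)
  have hderiv : ∀ k : ℕ, ∀ y : ℝ, y ∈ S →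
      HasDerivAt (fun τ : ℝ => (-lam)^k * τ ^ (α*k+α) / Real.Gamma (α*k+α+1)) (g' k y) y := by
    intro k y hy
    have hy0 : y ≠ 0 := by
      have : t/2 < y := hy.1
      intro h; rw [h] at this; linarith
    exact ((Real.hasDerivAt_rpow_const (p := α*k+α) (Or.inl hy0)).const_mul
      ((-lam)^k)).div_const _
  have hbound : ∀ k : ℕ, ∀ y : ℝ, y ∈ S → ‖g' k y‖ ≤ u k := by
    intro k y hy
    have hy1 : t/2 < y := hy.1
    have hy2 : y < 2*t := hy.2
    have hy0 : 0 < y := by linarith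
    have hΓ : 0 < Real.Gamma (α*k+α+1) := Real.Gamma_pos_of_pos (by positivity)
    have hnorm : ‖g' k y‖ = lam^k * ((α*k+α) * y ^ (α*k+α-1)) / Real.Gamma (α*k+α+1) := by
      rw [hg'def]
      rw [norm_div, norm_mul, norm_pow, norm_neg, Real.norm_of_nonneg hlam,
        Real.norm_of_nonneg hΓ.le, Real.norm_of_nonneg (by positivity)]
    rw [hnorm, hudef]
    simp only []
    have hysplit : y ^ (α*k+α-1) = y ^ (α*(k:ℕ)) * y ^ (α-1) := by
      rw [← Real.rpow_add hy0]; ring_nf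
    have h1 : y ^ (α*(k:ℕ)) ≤ ((2*t) ^ α)^k := by
      rw [← Real.rpow_natCast ((2*t)^α) k, ← Real.rpow_mul (by linarith)]
      rw [show α * (k:ℝ) = (α*(k:ℕ)) by norm_num]
      exact Real.rpow_le_rpow hy0.le hy2.le (by positivity)
    have h2 : y ^ (α-1) ≤ (t/2) ^ (α-1) :=
      Real.rpow_le_rpow_of_nonpos (by linarith) hy1.le (by linarith)
    have h3 : α*k+α ≤ α * ((k:ℝ)+1) := le_of_eq (by ring)
    have hΓeq : Real.Gamma (α*k+(α+1)) = Real.Gamma (α*k+α+1) := by ring_nf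
    rw [hΓeq]
    rw [mul_div_assoc', div_le_div_iff₀ hΓ hΓ]
    apply mul_le_mul_of_nonneg_right _ hΓ.le
    calc lam^k * ((α*k+α) * y ^ (α*k+α-1))
        = (α*k+α) * (lam^k * (y ^ (α*(k:ℕ)) * y ^ (α-1))) := by rw [hysplit]; ring
      _ ≤ (α * ((k:ℝ)+1)) * ((lam^k * ((2*t)^α)^k) * (t/2)^(α-1)) := by
          apply mul_le_mul h3 _ (by positivity) (by positivity)
          have := mul_le_mul (mul_le_mul_of_nonneg_left h1 (by positivity : (0:ℝ) ≤ lam^k))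
            h2 (by positivity) (by positivity)
          calc lam^k * (y ^ (α*(k:ℕ)) * y ^ (α-1)) = (lam^k * y ^ (α*(k:ℕ))) * y^(α-1) := by ring
            _ ≤ (lam^k * ((2*t)^α)^k) * (t/2)^(α-1) := this
      _ = (t/2) ^ (α-1) * α * (((k:ℝ)+1) * (lam * (2*t)^α)^k) := by
          rw [mul_pow]; ring
  have hsum0 : Summable (fun k : ℕ => (-lam)^k * t ^ (α*k+α) / Real.Gamma (α*k+α+1)) := by
    apply Summable.of_norm_bounded ((ml_summable α (α+1) (lam * t^α) hα (by linarith)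
      (by positivity)).mul_left (t ^ α))
    intro k
    have hΓ : 0 < Real.Gamma (α*k+α+1) := Real.Gamma_pos_of_pos (by positivity)
    have hΓeq : Real.Gamma (α*k+(α+1)) = Real.Gamma (α*k+α+1) := by ring_nf
    rw [norm_div, norm_mul, norm_pow, norm_neg, Real.norm_of_nonneg hlam,
      Real.norm_of_nonneg hΓ.le, Real.norm_of_nonneg (Real.rpow_nonneg ht.le _), hΓeq]
    have he : t ^ (α*(k:ℕ)+α) = (t^α)^k * t^α := by
      rw [Real.rpow_add ht, Real.rpow_mul ht.le, Real.rpow_natCast]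
    rw [he, mul_pow]
    apply le_of_eq
    field_simp
  have hD := hasDerivAt_tsum_of_isPreconnected hu hopen hpre hderiv hbound htS hsum0 htS
  refine hD.congr_deriv ?_
  symm
  -- identify the sum of derivatives
  rw [show mittagLeffler α α (-(lam * t ^ α)) = ∑' k : ℕ, (-(lam * t^α))^k / Real.Gamma (α*k+α)
    from rfl, ← tsum_mul_left]
  apply tsum_congr; intro k
  have hne : α*k+α ≠ 0 := by positivity
  have hΓ1 : Real.Gamma (α*k+α+1) = (α*k+α) * Real.Gamma (α*k+α) := Real.Gamma_add_one hne
  have hΓ : 0 < Real.Gamma (α*k+α) := Real.Gamma_pos_of_pos (by positivity)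
  have he1 : (-(lam * t^α))^k = (-lam)^k * t^(α*(k:ℕ)) := by
    rw [show -(lam * t^α) = (-lam) * t^α by ring, mul_pow, ← Real.rpow_natCast (t^α) k,
      ← Real.rpow_mul ht.le]
  have he2 : t ^ (α*(k:ℕ)+α-1) = t ^ (α*(k:ℕ)) * t^(α-1) := by
    rw [← Real.rpow_add ht]; ring_nf
  rw [hg'def]
  simp only []
  rw [hΓ1, he1, he2]
  field_simp

/-- `Y = ∂_t^{1-α} Z` in Fourier space: the Riemann–Liouville derivative of order `1-α`
of `t ↦ E_{α,1}(-λ t^α)` equals `t^{α-1} E_{α,α}(-λ t^α)`. -/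
theorem riemannLiouville_deriv_Z_eq_Y
    (α lam : ℝ) (hα : 0 < α) (hα1 : α < 1) (hlam : 0 ≤ lam) (t : ℝ) (ht : 0 < t) :
    HasDerivAt
      (fun τ : ℝ => (1 / Real.Gamma α) *
        ∫ s in (0:ℝ)..τ, (τ - s) ^ (α - 1) * mittagLeffler α 1 (-(lam * s ^ α)))
      (t ^ (α - 1) * mittagLeffler α α (-(lam * t ^ α))) t := by
  have hD := main_deriv α lam hα hα1 hlam t ht
  apply hD.congr_of_eventuallyEq
  filter_upwards [isOpen_Ioi.mem_nhds (show t ∈ Ioi (0:ℝ) from ht)] with τ hτ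
  exact G_eq α lam hα hα1 hlam τ hτ
end

section
/- Let 0 < α ≤ 1 and λ ≥ 0. For every t > 0, the function t ↦ E_{α,1}(-λ t^α) is differentiable at t with derivative -λ t^{α-1} E_{α,α}(-λ t^α). -/
open MeasureTheory Real Set

/-- Key Gamma ratio inequality from log-convexity. -/
private lemma gamma_key {α : ℝ} (hα : 0 < α) (hα1 : α ≤ 1) {x : ℝ} (hx : 0 < x) :
    x * Real.Gamma x ≤ Real.Gamma (x + α) * (x + α) ^ (1 - α) := by
  rcases eq_or_lt_of_le hα1 with h1 | h1
  · rw [h1, sub_self, Real.rpow_zero, mul_one, ← Real.Gamma_add_one hx.ne']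
  · have hg : 0 < Real.Gamma (x + α) := Real.Gamma_pos_of_pos (by linarith)
    have h2 := Real.Gamma_mul_add_mul_le_rpow_Gamma_mul_rpow_Gamma
      (s := x + α) (t := x + 1 + α) (a := α) (b := 1 - α)
      (by linarith) (by linarith) hα (by linarith) (by ring)
    have harg : α * (x + α) + (1 - α) * (x + 1 + α) = x + 1 := by ring
    rw [harg] at h2
    have h3 : Real.Gamma (x + 1 + α) = (x + α) * Real.Gamma (x + α) := by
      rw [show x + 1 + α = (x + α) + 1 by ring, Real.Gamma_add_one (by positivity)]
    rw [Real.Gamma_add_one hx.ne', h3,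
      Real.mul_rpow (by linarith) hg.le] at h2
    calc x * Real.Gamma x
        ≤ Real.Gamma (x + α) ^ α * ((x + α) ^ (1 - α) * Real.Gamma (x + α) ^ (1 - α)) := h2
      _ = (Real.Gamma (x + α) ^ α * Real.Gamma (x + α) ^ (1 - α)) * (x + α) ^ (1 - α) := by
          ring
      _ = Real.Gamma (x + α) * (x + α) ^ (1 - α) := by
          rw [← Real.rpow_add hg, add_sub_cancel, Real.rpow_one]

private lemma summable_aux {α b C : ℝ} (hα : 0 < α) (hα1 : α ≤ 1) (hb : 0 < b) (hC : 0 ≤ C) :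
    Summable (fun k : ℕ => ((k : ℝ) + 1) * C ^ k / Real.Gamma (α * k + b)) := by
  apply summable_of_ratio_norm_eventually_le (r := 1/2) (by norm_num)
  have h1 : Filter.Tendsto (fun k : ℕ => α * (k : ℝ) + b) Filter.atTop Filter.atTop := by
    apply Filter.tendsto_atTop_add_const_right
    exact Filter.Tendsto.const_mul_atTop hα tendsto_natCast_atTop_atTop
  have h2 : Filter.Tendsto (fun k : ℕ => (α * (k : ℝ) + b) ^ α) Filter.atTop Filter.atTop :=
    (tendsto_rpow_atTop hα).comp h1
  filter_upwards [h1.eventually_ge_atTop 1, h2.eventually_ge_atTop (8 * C)] with k hk1 hk2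
  set x : ℝ := α * k + b with hxdef
  have hx0 : (0 : ℝ) < x := by linarith
  have hΓx : 0 < Real.Gamma x := Real.Gamma_pos_of_pos hx0
  have hΓxa : 0 < Real.Gamma (x + α) := Real.Gamma_pos_of_pos (by linarith)
  have harg : α * ((k : ℕ) + 1 : ℝ) + b = x + α := by rw [hxdef]; ring
  have hnn1 : (0:ℝ) ≤ ((k : ℝ) + 1) * C ^ k / Real.Gamma x := by positivity
  have hnn2 : (0:ℝ) ≤ ((k : ℝ) + 1 + 1) * C ^ (k+1) / Real.Gamma (x + α) := by positivity
  rw [Real.norm_eq_abs, Real.norm_eq_abs]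
  push_cast
  rw [harg, abs_of_nonneg hnn2, abs_of_nonneg hnn1]
  -- reduce to multiplicative inequality
  rw [show (1:ℝ)/2 * (((k : ℝ) + 1) * C ^ k / Real.Gamma x)
      = (1/2 * (((k : ℝ) + 1) * C ^ k)) / Real.Gamma x by ring,
    div_le_div_iff₀ hΓxa hΓx]
  -- key bounds
  have hpow : 0 < (x + α) ^ (1 - α) := Real.rpow_pos_of_pos (by linarith) _
  have e1 : (x + α) ^ (1 - α) ≤ 2 * x ^ (1 - α) := by
    have hxa2 : x + α ≤ 2 * x := by linarith
    have r1 : (x + α) ^ (1 - α) ≤ (2 * x) ^ (1 - α) :=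
      Real.rpow_le_rpow (by linarith) hxa2 (by linarith)
    have r2 : (2 * x) ^ (1 - α) = 2 ^ (1 - α) * x ^ (1 - α) :=
      Real.mul_rpow (by norm_num) (by linarith)
    have r3 : (2:ℝ) ^ (1 - α) ≤ 2 := by
      have := Real.rpow_le_rpow_of_exponent_le (x := (2:ℝ)) (by norm_num)
        (show 1 - α ≤ 1 by linarith)
      rwa [Real.rpow_one] at this
    have r4 : (0:ℝ) ≤ x ^ (1 - α) := Real.rpow_nonneg (by linarith) _
    nlinarith
  have e2 : 8 * C * x ^ (1 - α) ≤ x := by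
    have r5 : x ^ α * x ^ (1 - α) = x := by
      rw [← Real.rpow_add hx0]; norm_num
    have r4 : (0:ℝ) ≤ x ^ (1 - α) := Real.rpow_nonneg (by linarith) _
    nlinarith
  have e3 : C * (x + α) ^ (1 - α) ≤ x / 4 := by nlinarith
  have hkey := gamma_key hα hα1 hx0
  have hCk : (0:ℝ) ≤ C ^ k := pow_nonneg hC k
  -- multiply target by (x+α)^(1-α)
  rw [← mul_le_mul_iff_of_pos_right hpow]
  calc ((k : ℝ) + 1 + 1) * C ^ (k + 1) * Real.Gamma x * (x + α) ^ (1 - α)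
      = ((k : ℝ) + 2) * (C ^ k * Real.Gamma x) * (C * (x + α) ^ (1 - α)) := by ring
    _ ≤ ((k : ℝ) + 2) * (C ^ k * Real.Gamma x) * (x / 4) := by
        apply mul_le_mul_of_nonneg_left e3 (by positivity)
    _ ≤ (1/2 * (((k : ℝ) + 1) * C ^ k)) * (x * Real.Gamma x) := by
        nlinarith [mul_nonneg (mul_nonneg hCk hΓx.le) hx0.le,
          mul_nonneg (Nat.cast_nonneg (α := ℝ) k) (mul_nonneg (mul_nonneg hCk hΓx.le) hx0.le)]
    _ ≤ (1/2 * (((k : ℝ) + 1) * C ^ k)) * (Real.Gamma (x + α) * (x + α) ^ (1 - α)) := by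
        apply mul_le_mul_of_nonneg_left hkey (by positivity)
    _ = 1/2 * (((k : ℝ) + 1) * C ^ k) * Real.Gamma (x + α) * (x + α) ^ (1 - α) := by ring

private lemma summable_ml {α b : ℝ} (x : ℝ) (hα : 0 < α) (hα1 : α ≤ 1) (hb : 0 < b) :
    Summable (fun k : ℕ => x ^ k / Real.Gamma (α * k + b)) := by
  refine Summable.of_norm ?_
  refine Summable.of_nonneg_of_le (fun k => norm_nonneg _) (fun k => ?_)
    (summable_aux hα hα1 hb (abs_nonneg x))
  have hΓ : 0 < Real.Gamma (α * k + b) := Real.Gamma_pos_of_pos (by positivity)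
  rw [Real.norm_eq_abs, abs_div, abs_pow, abs_of_pos hΓ]
  have h1k : |x| ^ k ≤ ((k : ℝ) + 1) * |x| ^ k := by
    nlinarith [pow_nonneg (abs_nonneg x) k, Nat.cast_nonneg (α := ℝ) k]
  gcongr

theorem hasDerivAt_mittagLeffler_alpha_one
    (α lam : ℝ) (hα : 0 < α) (hα1 : α ≤ 1) (hlam : 0 ≤ lam) (t : ℝ) (ht : 0 < t) :
    HasDerivAt (fun τ : ℝ => mittagLeffler α 1 (-(lam * τ ^ α)))
      (-(lam * t ^ (α - 1) * mittagLeffler α α (-(lam * t ^ α)))) t := by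
  have hz0 : (0:ℝ) < t ^ α := Real.rpow_pos_of_pos ht α
  set z0 : ℝ := t ^ α with hz0def
  set c : ℕ → ℝ := fun k => (-lam) ^ k / Real.Gamma (α * k + 1) with hcdef
  set R : ℝ := z0 + 1 with hRdef
  have hR1 : (1:ℝ) ≤ R := by simp [hRdef]; linarith
  set s : Set ℝ := Ioo (-(z0 + 1)) (z0 + 1) with hsdef
  have hz0mem : z0 ∈ s := by constructor <;> simp <;> linarith
  set u : ℕ → ℝ := fun k => ((k : ℝ) + 1) * (lam * R) ^ k / Real.Gamma (α * k + 1) with hudef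
  have hu : Summable u := summable_aux hα hα1 one_pos (by positivity)
  -- derivative bound on s
  have hg' : ∀ (k : ℕ) (z : ℝ), z ∈ s → ‖c k * ((k : ℝ) * z ^ (k - 1))‖ ≤ u k := by
    intro k z hz
    have hΓ : 0 < Real.Gamma (α * k + 1) := Real.Gamma_pos_of_pos (by positivity)
    have hzR : |z| ≤ R := by
      rw [abs_le]; exact ⟨by have := hz.1; simp at this ⊢; linarith, (hz.2).le⟩
    have hck : |c k| = lam ^ k / Real.Gamma (α * k + 1) := by
      rw [hcdef]; rw [abs_div, abs_pow, abs_neg, abs_of_nonneg hlam, abs_of_pos hΓ]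
    have hb1 : |z| ^ (k - 1) ≤ R ^ k :=
      (pow_le_pow_left₀ (abs_nonneg z) hzR _).trans (pow_le_pow_right₀ hR1 (Nat.sub_le k 1))
    have hb2 : (k : ℝ) * |z| ^ (k - 1) ≤ ((k : ℝ) + 1) * R ^ k := by
      have h0 : (0:ℝ) ≤ (k:ℝ) := Nat.cast_nonneg k
      have h3 : (0:ℝ) ≤ |z| ^ (k-1) := pow_nonneg (abs_nonneg z) _
      nlinarith [pow_nonneg (le_trans zero_le_one hR1) k]
    calc ‖c k * ((k : ℝ) * z ^ (k - 1))‖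
        = (lam ^ k / Real.Gamma (α * k + 1)) * ((k : ℝ) * |z| ^ (k - 1)) := by
          rw [norm_mul, Real.norm_eq_abs, Real.norm_eq_abs, hck, abs_mul, abs_pow,
            Nat.abs_cast]
      _ ≤ (lam ^ k / Real.Gamma (α * k + 1)) * (((k : ℝ) + 1) * R ^ k) := by
          apply mul_le_mul_of_nonneg_left hb2 (by positivity)
      _ = u k := by simp only [hudef, mul_pow]; ring
  have hf0 : Summable fun k : ℕ => c k * z0 ^ k := by
    refine (summable_ml ((-lam) * z0) hα hα1 one_pos).congr fun k => ?_
    rw [hcdef, mul_pow]; ring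
  have hFderiv : HasDerivAt (fun z : ℝ => ∑' k : ℕ, c k * z ^ k)
      (∑' k : ℕ, c k * ((k : ℝ) * z0 ^ (k - 1))) z0 := by
    refine hasDerivAt_tsum_of_isPreconnected hu isOpen_Ioo
      (convex_Ioo _ _).isPreconnected
      (fun k z _ => (hasDerivAt_pow k z).const_mul (c k)) hg' hz0mem hf0 hz0mem
  have hpowd : HasDerivAt (fun τ : ℝ => τ ^ α) (α * t ^ (α - 1)) t :=
    Real.hasDerivAt_rpow_const (Or.inl ht.ne')
  have hcomp := hFderiv.comp t hpowd
  -- rewrite the function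
  have hfun : (fun τ : ℝ => mittagLeffler α 1 (-(lam * τ ^ α)))
      = (fun z : ℝ => ∑' k : ℕ, c k * z ^ k) ∘ (fun τ : ℝ => τ ^ α) := by
    funext τ
    simp only [Function.comp, mittagLeffler, hcdef]
    refine tsum_congr fun k => ?_
    rw [show -(lam * τ ^ α) = (-lam) * τ ^ α by ring, mul_pow]
    ring
  -- rewrite the derivative value
  have hsd : Summable fun k : ℕ => c k * ((k : ℝ) * z0 ^ (k - 1)) :=
    Summable.of_norm_bounded hu fun k => hg' k z0 hz0mem
  have hML : Summable fun k : ℕ => (-(lam * z0)) ^ k / Real.Gamma (α * k + α) :=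
    summable_ml _ hα hα1 hα
  have hval : (∑' k : ℕ, c k * ((k : ℝ) * z0 ^ (k - 1))) * (α * t ^ (α - 1))
      = -(lam * t ^ (α - 1) * mittagLeffler α α (-(lam * t ^ α))) := by
    have hterm : ∀ k : ℕ, c (k + 1) * (((k : ℝ) + 1) * z0 ^ (k + 1 - 1))
        = (-lam / α) * ((-(lam * z0)) ^ k / Real.Gamma (α * k + α)) := by
      intro k
      have hΓpos : (0:ℝ) < α * (k + 1) := by positivity
      have hΓ : Real.Gamma (α * ((k:ℝ) + 1) + 1)
          = (α * ((k:ℝ) + 1)) * Real.Gamma (α * (k:ℝ) + α) := by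
        rw [Real.Gamma_add_one (by positivity)]
        ring_nf
      have hΓ2 : 0 < Real.Gamma (α * (k:ℝ) + α) := Real.Gamma_pos_of_pos (by positivity)
      rw [hcdef]
      simp only [Nat.add_sub_cancel]
      push_cast
      rw [hΓ]
      have hk1 : ((k:ℝ) + 1) ≠ 0 := by positivity
      rw [show (-(lam * z0)) ^ k = (-lam) ^ k * z0 ^ k by rw [← mul_pow]; ring_nf]
      field_simp
      ring
    rw [Summable.tsum_eq_zero_add hsd]
    simp only [Nat.cast_zero, zero_mul, mul_zero, zero_add, Nat.cast_add, Nat.cast_one]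
    rw [tsum_congr hterm, tsum_mul_left]
    rw [mittagLeffler, ← hz0def]
    field_simp
  rw [hfun, ← hval]
  exact hcomp
end
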